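/- arXiv:1610.03972 — 13 statements merged into one kernel-verified Lean document; each statement's English description precedes it below -/
import Mathlib

section
/- Let G be a graph without isolated vertices such that for every non-maximum independent set A of G and every vertex v not in A, there exists a maximum independent set S of G with A ⊆ S and v ∉ S. Then for every vertex v of G, the graph G - v is well-covered. -/
open Finset

/-- A finset of vertices is independent: no two of its members are adjacent. -/
def IndepSet {V : Type*} (G : SimpleGraph V) (A : Finset V) : Prop :=
  ∀ u ∈ A, ∀ v ∈ A, ¬ G.Adj u v

open scoped Classical in
/-- Maximum size of an independent set contained in `s` (independence number of `G[s]`). -/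
noncomputable def alphaOn {V : Type*} [Fintype V] (G : SimpleGraph V) (s : Finset V) : ℕ :=
  ((s.powerset).filter (fun A => IndepSet G A)).sup Finset.card

/-- The independence number of `G`. -/
noncomputable def alpha {V : Type*} [Fintype V] (G : SimpleGraph V) : ℕ :=
  alphaOn G Finset.univ

/-- The induced subgraph `G[s]` is well-covered: every maximal independent subset of `s`
has maximum cardinality. -/
def WellCoveredOn {V : Type*} [Fintype V] (G : SimpleGraph V) (s : Finset V) : Prop :=
  ∀ A ⊆ s, IndepSet G A →
    (∀ B ⊆ s, IndepSet G B → A ⊆ B → A = B) → A.card = alphaOn G s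

/-- `G` is well-covered. -/
def WellCovered {V : Type*} [Fintype V] (G : SimpleGraph V) : Prop :=
  WellCoveredOn G Finset.univ

open scoped Classical in
/-- The open neighborhood `N(A)`: vertices having a neighbor in `A`. -/
noncomputable def nbhd {V : Type*} [Fintype V] (G : SimpleGraph V) (A : Finset V) : Finset V :=
  Finset.univ.filter (fun v => ∃ u ∈ A, G.Adj u v)

/-- The closed neighborhood `N[A] = A ∪ N(A)`. -/
noncomputable def closedNbhd {V : Type*} [Fintype V] [DecidableEq V] (G : SimpleGraph V) (A : Finset V) :
    Finset V :=
  A ∪ nbhd G A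

/-- The induced subgraph `G[s]` is in class `W₂`: every two disjoint independent subsets of `s`
extend to two disjoint maximum independent subsets of `s`. -/
def W2On {V : Type*} [Fintype V] (G : SimpleGraph V) (s : Finset V) : Prop :=
  ∀ A ⊆ s, ∀ B ⊆ s, IndepSet G A → IndepSet G B → Disjoint A B →
    ∃ S₁ ⊆ s, ∃ S₂ ⊆ s, IndepSet G S₁ ∧ IndepSet G S₂ ∧
      S₁.card = alphaOn G s ∧ S₂.card = alphaOn G s ∧ Disjoint S₁ S₂ ∧ A ⊆ S₁ ∧ B ⊆ S₂

/-- `G` belongs to class `W₂`. -/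
def W2 {V : Type*} [Fintype V] (G : SimpleGraph V) : Prop :=
  W2On G Finset.univ


open scoped Classical in
lemma le_alphaOn {V : Type*} [Fintype V] (G : SimpleGraph V) {s A : Finset V}
    (hAs : A ⊆ s) (hA : IndepSet G A) : A.card ≤ alphaOn G s := by
  apply Finset.le_sup
  simp [Finset.mem_filter, Finset.mem_powerset, hAs, hA]

/-- If G has no isolated vertices and every non-maximum independent set A and vertex v ∉ A
admit a maximum independent set S with A ⊆ S and v ∉ S, then G - v is well-covered
for every vertex v. -/
theorem stmt1 {V : Type*} [Fintype V] [DecidableEq V] (G : SimpleGraph V)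
    (hiso : ∀ v : V, ∃ u, G.Adj v u)
    (h : ∀ A : Finset V, IndepSet G A → A.card < alpha G →
      ∀ v ∉ A, ∃ S : Finset V, IndepSet G S ∧ S.card = alpha G ∧ A ⊆ S ∧ v ∉ S) :
    ∀ v : V, WellCoveredOn G (Finset.univ.erase v) := by
  intro v A hAs hA hmax
  have hAindep := hA
  have hAuniv : A ⊆ Finset.univ := Finset.subset_univ A
  have hvA : v ∉ A := fun hv => (Finset.mem_erase.mp (hAs hv)).1 rfl
  have halpha1 : 1 ≤ alpha G := by
    have : ({v} : Finset V).card ≤ alpha G :=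
      le_alphaOn G (Finset.subset_univ _) (by
        intro a ha b hb
        simp only [Finset.mem_singleton] at ha hb
        subst ha; subst hb; exact fun hadj => (G.loopless.irrefl _) hadj)
    simpa using this
  -- a maximum independent set avoiding v
  obtain ⟨T, hTindep, hTcard, _, hvT⟩ :=
    h ∅ (by intro a ha; simp at ha) (by rw [Finset.card_empty]; exact halpha1) v (by simp)
  have hTs : T ⊆ Finset.univ.erase v := fun x hx =>
    Finset.mem_erase.mpr ⟨fun hxv => hvT (hxv ▸ hx), Finset.mem_univ x⟩
  have hOn : alphaOn G (Finset.univ.erase v) = alpha G := by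
    apply le_antisymm
    · classical
      apply Finset.sup_le
      intro B hB
      simp only [Finset.mem_filter, Finset.mem_powerset] at hB
      exact le_alphaOn G (Finset.subset_univ B) hB.2
    · rw [← hTcard]; exact le_alphaOn G hTs hTindep
  rw [hOn]
  have hle : A.card ≤ alpha G := le_alphaOn G hAuniv hA
  rcases lt_or_eq_of_le hle with hlt | heq
  · obtain ⟨S, hSindep, hScard, hAS, hvS⟩ := h A hA hlt v hvA
    have hSs : S ⊆ Finset.univ.erase v := fun x hx =>
      Finset.mem_erase.mpr ⟨fun hxv => hvS (hxv ▸ hx), Finset.mem_univ x⟩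
    have := hmax S hSs hSindep hAS
    rw [this, hScard]
  · exact heq
end

section
/- Let G be a connected graph without isolated vertices, G ≠ P_3, such that G - v is well-covered for every vertex v. Then G itself is well-covered. -/
open Finset

open scoped Classical

lemma indep_mono {V : Type*} {G : SimpleGraph V} {A B : Finset V}
    (h : IndepSet G B) (hAB : A ⊆ B) : IndepSet G A :=
  fun u hu v hv => h u (hAB hu) v (hAB hv)

lemma card_le_alphaOn {V : Type*} [Fintype V] {G : SimpleGraph V} {s A : Finset V}
    (hAs : A ⊆ s) (hA : IndepSet G A) : A.card ≤ alphaOn G s :=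
  Finset.le_sup (Finset.mem_filter.mpr ⟨Finset.mem_powerset.mpr hAs, hA⟩)

lemma alphaOn_mono {V : Type*} [Fintype V] {G : SimpleGraph V} {s t : Finset V}
    (hst : s ⊆ t) : alphaOn G s ≤ alphaOn G t := by
  apply Finset.sup_le
  intro A hA
  rw [Finset.mem_filter, Finset.mem_powerset] at hA
  exact card_le_alphaOn (hA.1.trans hst) hA.2

lemma exists_max_indep {V : Type*} [Fintype V] (G : SimpleGraph V) (s : Finset V) :
    ∃ A, A ⊆ s ∧ IndepSet G A ∧ A.card = alphaOn G s := by
  obtain ⟨A, hA, hc⟩ := Finset.exists_mem_eq_sup ((s.powerset).filter (fun A => IndepSet G A))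
    ⟨∅, Finset.mem_filter.mpr ⟨Finset.mem_powerset.mpr (Finset.empty_subset s),
      fun u hu => absurd hu (Finset.notMem_empty u)⟩⟩ Finset.card
  rw [Finset.mem_filter, Finset.mem_powerset] at hA
  exact ⟨A, hA.1, hA.2, hc.symm⟩

lemma exists_maximal_ext {V : Type*} [Fintype V] {G : SimpleGraph V} {s A : Finset V}
    (hAs : A ⊆ s) (hA : IndepSet G A) :
    ∃ B, A ⊆ B ∧ B ⊆ s ∧ IndepSet G B ∧ ∀ C ⊆ s, IndepSet G C → B ⊆ C → B = C := by
  obtain ⟨B, hB, hmax⟩ : ∃ B ∈ (s.powerset).filter (fun B => A ⊆ B ∧ IndepSet G B),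
      ∀ C ∈ (s.powerset).filter (fun B => A ⊆ B ∧ IndepSet G B), ¬ B < C := by
    obtain ⟨B, hBm⟩ := Finset.exists_maximal (s := (s.powerset).filter (fun B => A ⊆ B ∧ IndepSet G B))
      ⟨A, Finset.mem_filter.mpr ⟨Finset.mem_powerset.mpr hAs, Finset.Subset.refl A, hA⟩⟩
    exact ⟨B, hBm.1, fun C hC hlt => lt_irrefl _ (lt_of_lt_of_le hlt (hBm.2 hC hlt.le))⟩
  rw [Finset.mem_filter, Finset.mem_powerset] at hB
  refine ⟨B, hB.2.1, hB.1, hB.2.2, fun C hCs hC hBC => ?_⟩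
  by_contra hne
  exact hmax C (Finset.mem_filter.mpr ⟨Finset.mem_powerset.mpr hCs, hB.2.1.trans hBC, hC⟩)
    (lt_of_le_of_ne hBC hne)

lemma maximal_dom {V : Type*} [Fintype V] {G : SimpleGraph V} {s B : Finset V}
    (hBs : B ⊆ s) (hB : IndepSet G B)
    (hmax : ∀ C ⊆ s, IndepSet G C → B ⊆ C → B = C) :
    ∀ v ∈ s, v ∉ B → ∃ u ∈ B, G.Adj u v := by
  intro v hvs hvB
  by_contra hno
  push_neg at hno
  have hins : insert v B ⊆ s := Finset.insert_subset hvs hBs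
  have hindep : IndepSet G (insert v B) := by
    intro x hx y hy hadj
    rcases Finset.mem_insert.mp hx with h1 | h1 <;> rcases Finset.mem_insert.mp hy with h2 | h2
    · rw [h1, h2] at hadj; exact G.loopless.irrefl v hadj
    · rw [h1] at hadj; exact hno y h2 hadj.symm
    · rw [h2] at hadj; exact hno x h1 hadj
    · exact hB x h1 y h2 hadj
  have := hmax (insert v B) hins hindep (Finset.subset_insert v B)
  exact hvB (this ▸ Finset.mem_insert_self v B)

/-- A connected graph without isolated vertices, not isomorphic to P₃, such that G - v
is well-covered for every v, is itself well-covered. -/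
theorem stmt2 {V : Type*} [Fintype V] [DecidableEq V] (G : SimpleGraph V)
    (hconn : G.Connected) (hiso : ∀ v : V, ∃ u, G.Adj v u)
    (hP3 : ¬ Nonempty (G ≃g SimpleGraph.pathGraph 3))
    (h : ∀ v : V, WellCoveredOn G (Finset.univ.erase v)) :
    WellCovered G := by
  intro A hAu hA hmax
  by_contra hne
  have hle : A.card ≤ alphaOn G Finset.univ := card_le_alphaOn hAu hA
  have hlt : A.card < alphaOn G Finset.univ := lt_of_le_of_ne hle hne
  -- domination by A
  have hdom : ∀ v, v ∉ A → ∃ u ∈ A, G.Adj u v := fun v hv =>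
    maximal_dom hAu hA hmax v (Finset.mem_univ v) hv
  -- every vertex outside A is in every maximum independent set
  have hin : ∀ S : Finset V, IndepSet G S → S.card = alphaOn G Finset.univ →
      ∀ v, v ∉ A → v ∈ S := by
    intro S hS hSc v hv
    by_contra hvS
    have hSe : S ⊆ Finset.univ.erase v :=
      fun x hx => Finset.mem_erase.mpr ⟨fun hxv => hvS (hxv ▸ hx), Finset.mem_univ x⟩
    have hAe : A ⊆ Finset.univ.erase v :=
      fun x hx => Finset.mem_erase.mpr ⟨fun hxv => hv (hxv ▸ hx), Finset.mem_univ x⟩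
    have hSmax : ∀ C ⊆ Finset.univ.erase v, IndepSet G C → S ⊆ C → S = C := by
      intro C hCs hC hSC
      apply Finset.eq_of_subset_of_card_le hSC
      rw [hSc]
      exact card_le_alphaOn (Finset.subset_univ C) hC
    have hAmax : ∀ C ⊆ Finset.univ.erase v, IndepSet G C → A ⊆ C → A = C :=
      fun C hCs hC hAC => hmax C (Finset.subset_univ C) hC hAC
    have h1 := h v S hSe hS hSmax
    have h2 := h v A hAe hA hAmax
    rw [hSc] at h1
    rw [← h1] at h2
    omega
  -- each vertex of A has a neighbor outside A
  have hout : ∀ a ∈ A, ∃ x, x ∉ A ∧ G.Adj a x := by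
    intro a ha
    obtain ⟨u, hu⟩ := hiso a
    exact ⟨u, fun huA => hA a ha u huA hu, hu⟩
  obtain ⟨S₀, hS₀u, hS₀i, hS₀c⟩ := exists_max_indep G (Finset.univ : Finset V)
  -- A is nonempty
  have hAne : A.Nonempty := by
    rcases Finset.eq_empty_or_nonempty A with rfl | hAne
    · have : 0 < S₀.card := by rw [hS₀c]; omega
      obtain ⟨v, hv⟩ := Finset.card_pos.mp this
      obtain ⟨u, hu, _⟩ := hdom v (Finset.notMem_empty v)
      exact absurd hu (Finset.notMem_empty u)
    · exact hAne
  -- A is a singleton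
  have hsingle : ∀ w ∈ A, ∀ a ∈ A, a = w := by
    intro w hw a ha
    by_contra hne'
    obtain ⟨x, hxA, hwx⟩ := hout w hw
    have hxS₀ : x ∈ S₀ := hin S₀ hS₀i hS₀c x hxA
    have hwS₀ : w ∉ S₀ := fun hwS => hS₀i w hwS x hxS₀ hwx
    have hS₀e : S₀ ⊆ Finset.univ.erase w :=
      fun y hy => Finset.mem_erase.mpr ⟨fun hyw => hwS₀ (hyw ▸ hy), Finset.mem_univ y⟩
    have halpha_w : alphaOn G (Finset.univ.erase w) = alphaOn G Finset.univ :=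
      le_antisymm (alphaOn_mono (Finset.erase_subset _ _))
        (hS₀c ▸ card_le_alphaOn hS₀e hS₀i)
    have hAw : A.erase w ⊆ Finset.univ.erase w :=
      fun y hy => Finset.mem_erase.mpr ⟨(Finset.mem_erase.mp hy).1, Finset.mem_univ y⟩
    obtain ⟨B, hAB, hBs, hBi, hBmax⟩ :=
      exists_maximal_ext hAw (indep_mono hA (Finset.erase_subset w A))
    have hBcard : B.card = alphaOn G Finset.univ := (h w B hBs hBi hBmax).trans halpha_w
    have haB : a ∈ B := hAB (Finset.mem_erase.mpr ⟨hne', ha⟩)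
    obtain ⟨u, huA, hau⟩ := hout a ha
    have huB : u ∈ B := hin B hBi hBcard u huA
    exact hBi a haB u huB hau
  obtain ⟨w, hw⟩ := hAne
  have hAeq : A = {w} := by
    apply Finset.eq_singleton_iff_unique_mem.mpr
    exact ⟨hw, fun a ha => hsingle w hw a ha⟩
  -- every vertex ≠ w is adjacent to w
  have hstar : ∀ v : V, v ≠ w → G.Adj w v := by
    intro v hv
    obtain ⟨u, hu, hadj⟩ := hdom v (by rw [hAeq]; simp [hv])
    rw [hAeq, Finset.mem_singleton] at hu
    rwa [hu] at hadj
  -- S₀ = univ.erase w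
  have hwS₀ : w ∉ S₀ := by
    obtain ⟨u, hu⟩ := hiso w
    have huA : u ∉ A := fun huA => hA w hw u huA hu
    have huS₀ : u ∈ S₀ := hin S₀ hS₀i hS₀c u huA
    exact fun hwS => hS₀i w hwS u huS₀ hu
  have hS₀eq : S₀ = Finset.univ.erase w := by
    apply Finset.Subset.antisymm
    · exact fun y hy => Finset.mem_erase.mpr ⟨fun hyw => hwS₀ (hyw ▸ hy), Finset.mem_univ y⟩
    · intro y hy
      exact hin S₀ hS₀i hS₀c y (by rw [hAeq]; simpa using (Finset.mem_erase.mp hy).1)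
  -- |V \ {w}| = alpha ≥ 2
  have hcard2 : 2 ≤ (Finset.univ.erase w).card := by
    have : (Finset.univ.erase w).card = alphaOn G Finset.univ := by rw [← hS₀eq, hS₀c]
    rw [this]
    have : A.card = 1 := by rw [hAeq]; simp
    omega
  -- the leaves are independent among themselves
  have hleaf : ∀ y ∈ Finset.univ.erase w, ∀ z ∈ Finset.univ.erase w, ¬ G.Adj y z := by
    rw [← hS₀eq]; exact hS₀i
  rcases lt_or_ge 2 (Finset.univ.erase w).card with hbig | hsmall
  · -- at least 3 leaves : contradiction with h v for a leaf v
    obtain ⟨v, hv⟩ := Finset.card_pos.mp (by omega : 0 < (Finset.univ.erase w).card)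
    have hcv : 2 ≤ ((Finset.univ.erase w).erase v).card := by
      rw [Finset.card_erase_of_mem hv]; omega
    obtain ⟨y, hy⟩ := Finset.card_pos.mp (by omega : 0 < ((Finset.univ.erase w).erase v).card)
    obtain ⟨z, hz⟩ := Finset.card_pos.mp
      (by rw [Finset.card_erase_of_mem hy]; omega : 0 < (((Finset.univ.erase w).erase v).erase y).card)
    have hyW := (Finset.mem_erase.mp hy).2
    have hyv := (Finset.mem_erase.mp hy).1
    have hzy := (Finset.mem_erase.mp hz).1
    have hzW := (Finset.mem_erase.mp (Finset.mem_erase.mp hz).2).2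
    have hzv := (Finset.mem_erase.mp (Finset.mem_erase.mp hz).2).1
    have hvw := (Finset.mem_erase.mp hv).1
    -- {w} is maximal independent in univ.erase v
    have hwmax : ({w} : Finset V).card = alphaOn G (Finset.univ.erase v) := by
      apply h v
      · intro t ht
        rw [Finset.mem_singleton] at ht
        exact Finset.mem_erase.mpr ⟨ht ▸ (Ne.symm hvw), Finset.mem_univ t⟩
      · intro t ht t' ht'
        rw [Finset.mem_singleton] at ht ht'
        rw [ht, ht']
        exact G.loopless.irrefl w
      · intro C hCs hC hwC
        symm
        apply Finset.eq_singleton_iff_unique_mem.mpr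
        refine ⟨hwC (Finset.mem_singleton_self w), fun c hc => ?_⟩
        by_contra hcw
        exact hC c hc w (hwC (Finset.mem_singleton_self w)) (hstar c hcw).symm
    -- but {y, z} is independent in univ.erase v with card 2
    have hyz : ({y, z} : Finset V) ⊆ Finset.univ.erase v := by
      intro t ht
      rcases Finset.mem_insert.mp ht with rfl | ht
      · exact Finset.mem_erase.mpr ⟨hyv, Finset.mem_univ t⟩
      · rw [Finset.mem_singleton] at ht
        exact Finset.mem_erase.mpr ⟨ht ▸ hzv, Finset.mem_univ t⟩
    have hyzi : IndepSet G ({y, z} : Finset V) := by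
      intro t ht t' ht'
      have hmem : ∀ s ∈ ({y, z} : Finset V), s ∈ Finset.univ.erase w := by
        intro s hs
        rcases Finset.mem_insert.mp hs with h0 | h0
        · rw [h0]; exact hyW
        · rw [Finset.mem_singleton] at h0
          rw [h0]; exact hzW
      exact hleaf t (hmem t ht) t' (hmem t' ht')
    have h2 : 2 ≤ alphaOn G (Finset.univ.erase v) := by
      have : ({y, z} : Finset V).card = 2 := by
        rw [Finset.card_insert_of_notMem (by simpa using hzy.symm), Finset.card_singleton]
      rw [← this]
      exact card_le_alphaOn hyz hyzi
    rw [Finset.card_singleton] at hwmax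
    omega
  · -- exactly 2 leaves : G ≅ P3, contradiction
    have hcard : (Finset.univ.erase w).card = 2 := le_antisymm hsmall hcard2
    obtain ⟨a, b, hab, habeq⟩ := Finset.card_eq_two.mp hcard
    have haw : a ≠ w := by
      have : a ∈ Finset.univ.erase w := habeq ▸ Finset.mem_insert_self a {b}
      exact (Finset.mem_erase.mp this).1
    have hbw : b ≠ w := by
      have : b ∈ Finset.univ.erase w := habeq ▸ Finset.mem_insert.mpr (Or.inr (Finset.mem_singleton_self b))
      exact (Finset.mem_erase.mp this).1
    have htri : ∀ x : V, x = a ∨ x = w ∨ x = b := by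
      intro x
      by_cases hxw : x = w
      · exact Or.inr (Or.inl hxw)
      · have : x ∈ ({a, b} : Finset V) := habeq ▸ Finset.mem_erase.mpr ⟨hxw, Finset.mem_univ x⟩
        rcases Finset.mem_insert.mp this with hx | hx
        · exact Or.inl hx
        · exact Or.inr (Or.inr (Finset.mem_singleton.mp hx))
    have hwa : G.Adj w a := hstar a haw
    have hwb : G.Adj w b := hstar b hbw
    have hnab : ¬ G.Adj a b := by
      apply hleaf
      · exact habeq ▸ Finset.mem_insert_self a {b}
      · exact habeq ▸ Finset.mem_insert.mpr (Or.inr (Finset.mem_singleton_self b))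
    have hnba : ¬ G.Adj b a := fun hh => hnab hh.symm
    apply hP3
    refine ⟨⟨⟨fun x => if x = a then 0 else if x = w then 1 else 2,
      fun i => if i = 0 then a else if i = 1 then w else b, ?_, ?_⟩, ?_⟩⟩
    · intro x
      rcases htri x with h0 | h0 | h0 <;> rw [h0] <;>
        simp [haw, hbw, Ne.symm haw, Ne.symm hbw, hab, Ne.symm hab]
    · intro i
      fin_cases i <;> simp [haw, hbw, Ne.symm haw, Ne.symm hbw, hab, Ne.symm hab]
    · intro x y
      rcases htri x with h0 | h0 | h0 <;> rcases htri y with h1 | h1 | h1 <;>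
        simp only [h0, h1, Equiv.coe_fn_mk] <;>
        simp [SimpleGraph.pathGraph_adj, haw, hbw, Ne.symm haw, Ne.symm hbw, hab, Ne.symm hab,
          hnab, hnba, hwa, hwb, hwa.symm, hwb.symm, G.loopless.irrefl] <;>
        decide
end

section
/- Let G be a graph in class W_2 (every two disjoint independent sets of G extend to two disjoint maximum independent sets). Then for every non-maximum independent set S of G, the graph G - N[S] also belongs to W_2. -/
open Finset

lemma indep_subset {V : Type*} {G : SimpleGraph V} {A B : Finset V}
    (hAB : A ⊆ B) (hB : IndepSet G B) : IndepSet G A :=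
  fun u hu v hv => hB u (hAB hu) v (hAB hv)

/-- If G ∈ W₂ and S is a non-maximum independent set, then G - N[S] ∈ W₂. -/
theorem stmt3 {V : Type*} [Fintype V] [DecidableEq V] (G : SimpleGraph V) (h : W2 G)
    (S : Finset V) (hS : IndepSet G S) (hlt : S.card < alpha G) :
    W2On G (Finset.univ \ closedNbhd G S) := by
  classical
  set s : Finset V := Finset.univ \ closedNbhd G S with hs
  -- membership characterization
  have hmem : ∀ x, x ∈ s ↔ (x ∉ S ∧ ∀ u ∈ S, ¬ G.Adj u x) := by
    intro x
    simp only [hs, Finset.mem_sdiff, Finset.mem_univ, true_and, closedNbhd, nbhd,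
      Finset.mem_union, Finset.mem_filter, not_or, not_and, not_exists]
  -- any independent set has card ≤ alpha
  have halpha_le : ∀ T : Finset V, IndepSet G T → T.card ≤ alpha G := by
    intro T hT
    exact Finset.le_sup (Finset.mem_filter.2 ⟨Finset.mem_powerset.2 (Finset.subset_univ T), hT⟩)
  have halphaOn_le : ∀ T ⊆ s, IndepSet G T → T.card ≤ alphaOn G s := by
    intro T hTs hT
    exact Finset.le_sup (Finset.mem_filter.2 ⟨Finset.mem_powerset.2 hTs, hT⟩)
  -- union with S of an independent subset of s is independent
  have hcross : ∀ T ⊆ s, IndepSet G T → IndepSet G (T ∪ S) := by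
    intro T hTs hT u hu v hv hadj
    rw [Finset.mem_union] at hu hv
    rcases hu with hu | hu <;> rcases hv with hv | hv
    · exact hT u hu v hv hadj
    · exact ((hmem u).1 (hTs hu)).2 v hv hadj.symm
    · exact ((hmem v).1 (hTs hv)).2 u hu hadj
    · exact hS u hu v hv hadj
  -- disjointness of subsets of s with S
  have hdisjS : ∀ T ⊆ s, Disjoint T S := by
    intro T hTs
    refine Finset.disjoint_left.2 fun x hx hxS => ((hmem x).1 (hTs hx)).1 hxS
  -- a maximum independent set containing S, minus S, lands in s
  have hMs : ∀ M : Finset V, IndepSet G M → S ⊆ M → M \ S ⊆ s := by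
    intro M hM hSM x hx
    rw [Finset.mem_sdiff] at hx
    refine (hmem x).2 ⟨hx.2, fun u hu hadj => ?_⟩
    exact hM u (hSM hu) x hx.1 hadj
  intro A hA B hB hAind hBind hAB
  -- first application of W₂ : to A ∪ S and B
  have hASind : IndepSet G (A ∪ S) := hcross A hA hAind
  have hASB : Disjoint (A ∪ S) B := by
    rw [Finset.disjoint_union_left]
    exact ⟨hAB, (hdisjS B hB).symm⟩
  obtain ⟨M₁, -, M₂, -, hM₁ind, hM₂ind, hM₁card, hM₂card, hM₁₂, hASM₁, hBM₂⟩ :=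
    h (A ∪ S) (Finset.subset_univ _) B (Finset.subset_univ _) hASind hBind hASB
  have hSM₁ : S ⊆ M₁ := (Finset.union_subset_iff.1 hASM₁).2
  set S₁ : Finset V := M₁ \ S with hS₁def
  have hS₁s : S₁ ⊆ s := hMs M₁ hM₁ind hSM₁
  have hS₁ind : IndepSet G S₁ := indep_subset (Finset.sdiff_subset) hM₁ind
  have hS₁card : S₁.card = alpha G - S.card := by
    rw [hS₁def, Finset.card_sdiff_of_subset hSM₁, hM₁card]
    rfl
  -- alphaOn G s = alpha G - S.card
  have hSle : S.card ≤ alpha G := halpha_le S hS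
  have hkey : alphaOn G s = alpha G - S.card := by
    refine le_antisymm ?_ ?_
    · unfold alphaOn
      refine Finset.sup_le fun T hT => ?_
      rw [Finset.mem_filter, Finset.mem_powerset] at hT
      have h1 : (T ∪ S).card ≤ alpha G := halpha_le _ (hcross T hT.1 hT.2)
      rw [Finset.card_union_of_disjoint (hdisjS T hT.1)] at h1
      omega
    · rw [← hS₁card]
      exact halphaOn_le S₁ hS₁s hS₁ind
  -- second application of W₂ : to B ∪ S and S₁
  have hBSind : IndepSet G (B ∪ S) := hcross B hB hBind
  have hBSS₁ : Disjoint (B ∪ S) S₁ := by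
    rw [Finset.disjoint_union_left]
    constructor
    · exact Finset.disjoint_of_subset_left hBM₂ (Finset.disjoint_of_subset_right
        Finset.sdiff_subset hM₁₂.symm)
    · exact (hdisjS S₁ hS₁s).symm
  obtain ⟨N₁, -, N₂, -, hN₁ind, hN₂ind, hN₁card, hN₂card, hN₁₂, hBSN₁, hS₁N₂⟩ :=
    h (B ∪ S) (Finset.subset_univ _) S₁ (Finset.subset_univ _) hBSind hS₁ind hBSS₁
  have hSN₁ : S ⊆ N₁ := (Finset.union_subset_iff.1 hBSN₁).2
  set S₂ : Finset V := N₁ \ S with hS₂def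
  have hS₂s : S₂ ⊆ s := hMs N₁ hN₁ind hSN₁
  have hS₂ind : IndepSet G S₂ := indep_subset (Finset.sdiff_subset) hN₁ind
  have hS₂card : S₂.card = alpha G - S.card := by
    rw [hS₂def, Finset.card_sdiff_of_subset hSN₁, hN₁card]; rfl
  refine ⟨S₁, hS₁s, S₂, hS₂s, hS₁ind, hS₂ind, by rw [hS₁card, hkey], by rw [hS₂card, hkey],
    ?_, ?_, ?_⟩
  · exact Finset.disjoint_of_subset_left hS₁N₂ (Finset.disjoint_of_subset_right
      Finset.sdiff_subset hN₁₂.symm)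
  · exact Finset.subset_sdiff.2 ⟨(Finset.union_subset_iff.1 hASM₁).1, hdisjS A hA⟩
  · exact Finset.subset_sdiff.2 ⟨(Finset.union_subset_iff.1 hBSN₁).1, hdisjS B hB⟩
end

section
/- If G is a connected graph in class W_2 with G ≠ K_2, then G has no vertex of degree 1. -/
open Finset

lemma indep_card_le {V : Type*} [Fintype V] (G : SimpleGraph V) (A : Finset V)
    (hA : IndepSet G A) : A.card ≤ alphaOn G Finset.univ := by
  classical
  unfold alphaOn
  apply Finset.le_sup
  simp [hA]

/-- A connected graph in W₂ other than K₂ has no vertex of degree 1. -/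
theorem stmt4 {V : Type*} [Fintype V] (G : SimpleGraph V) [DecidableRel G.Adj]
    (hconn : G.Connected) (hK2 : ¬ Nonempty (G ≃g (⊤ : SimpleGraph (Fin 2))))
    (h : W2 G) :
    ∀ v : V, G.degree v ≠ 1 := by
  classical
  intro v hdeg
  obtain ⟨u, hu⟩ := Finset.card_eq_one.mp (show (G.neighborFinset v).card = 1 from hdeg)
  have hadj : G.Adj v u := by
    have : u ∈ G.neighborFinset v := by rw [hu]; simp
    simpa using this
  have hnb : ∀ x, G.Adj v x → x = u := by
    intro x hx
    have : x ∈ G.neighborFinset v := by simpa using hx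
    rw [hu] at this; simpa using this
  have hvu : v ≠ u := G.ne_of_adj hadj
  by_cases hw : ∃ w, G.Adj u w ∧ w ≠ v
  · obtain ⟨w, hadjw, hwv⟩ := hw
    obtain ⟨S₁, -, S₂, -, hS₁, hS₂, hc₁, hc₂, hdisj, hA, hB⟩ :=
      h {w} (Finset.subset_univ _) {v} (Finset.subset_univ _)
        (by intro a ha b hb; simp at ha hb; subst ha; subst hb; exact fun h' => G.irrefl h')
        (by intro a ha b hb; simp at ha hb; subst ha; subst hb; exact fun h' => G.irrefl h')
        (by simp [Finset.disjoint_singleton, Ne.symm hwv, hwv])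
    have hwS : w ∈ S₁ := hA (by simp)
    have hvS2 : v ∈ S₂ := hB (by simp)
    have hvS1 : v ∉ S₁ := fun hv => (Finset.disjoint_left.mp hdisj hv) hvS2
    have huS1 : u ∉ S₁ := fun huS => hS₁ u huS w hwS hadjw
    have hindep : IndepSet G (insert v S₁) := by
      intro a ha b hb hab
      rw [Finset.mem_insert] at ha hb
      rcases ha with ha | ha <;> rcases hb with hb | hb
      · subst ha; subst hb; exact G.irrefl hab
      · subst ha
        have hbu : b = u := hnb b hab
        subst hbu; exact huS1 hb
      · subst hb
        have hau : a = u := hnb a hab.symm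
        subst hau; exact huS1 ha
      · exact hS₁ a ha b hb hab
    have hle := indep_card_le G _ hindep
    rw [Finset.card_insert_of_notMem hvS1, hc₁] at hle
    omega
  · push_neg at hw
    have step : ∀ {a b : V}, G.Adj a b → (a = v ∨ a = u) → (b = v ∨ b = u) := by
      rintro a b hab (rfl | rfl)
      · exact Or.inr (hnb b hab)
      · exact Or.inl (hw b hab)
    have hclass : ∀ x : V, x = v ∨ x = u := by
      intro x
      obtain ⟨p⟩ := hconn.preconnected v x
      have hwalk : ∀ (a b : V) (p : G.Walk a b), (a = v ∨ a = u) → (b = v ∨ b = u) := by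
        intro a b p
        induction p with
        | nil => exact id
        | cons hadj' q ih => intro ha; exact ih (step hadj' ha)
      exact hwalk v x p (Or.inl rfl)
    have hadj2 : ∀ x y : V, G.Adj x y ↔ x ≠ y := by
      intro x y
      constructor
      · exact G.ne_of_adj
      · intro hxy
        rcases hclass x with rfl | rfl <;> rcases hclass y with rfl | rfl
        · exact absurd rfl hxy
        · exact hadj
        · exact hadj.symm
        · exact absurd rfl hxy
    refine hK2 ⟨⟨⟨fun x => if x = v then 0 else 1, fun i => if i = 0 then v else u, ?_, ?_⟩, ?_⟩⟩
    · intro x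
      rcases hclass x with rfl | rfl
      · simp
      · simp [hvu.symm, Ne.symm hvu]
    · intro i
      fin_cases i <;> simp [Ne.symm hvu]
    · intro x y
      simp only [SimpleGraph.top_adj, Equiv.coe_fn_mk]
      rw [hadj2]
      rcases hclass x with rfl | rfl <;> rcases hclass y with rfl | rfl <;>
        simp [hvu, Ne.symm hvu]
end

section
/- If G is a connected graph in class W_2 with G ≠ K_2, then for every pair of vertices u, v of G there exists a maximum independent set S of G with S ∩ {u, v} = ∅. -/
open Finset

lemma indep_singleton {V : Type*} (G : SimpleGraph V) (a : V) : IndepSet G {a} := by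
  intro x hx y hy
  simp only [Finset.mem_singleton] at hx hy
  subst hx; subst hy; exact G.loopless.irrefl _

lemma aux_adj {V : Type*} [Fintype V] (G : SimpleGraph V) (h : W2 G) {u v w : V}
    (hw : G.Adj u w) (hwv : w ≠ v) :
    ∃ S : Finset V, IndepSet G S ∧ S.card = alpha G ∧ u ∉ S ∧ v ∉ S := by
  obtain ⟨S₁, -, S₂, -, -, hI₂, -, hc₂, hdisj, hv, hwS⟩ :=
    h {v} (Finset.subset_univ _) {w} (Finset.subset_univ _)
      (indep_singleton G v) (indep_singleton G w)
      (by simp [Finset.disjoint_singleton, hwv, Ne.symm hwv])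
  refine ⟨S₂, hI₂, hc₂, ?_, ?_⟩
  · intro huS
    exact hI₂ u huS w (hwS (Finset.mem_singleton_self w)) hw
  · intro hvS
    exact (Finset.disjoint_left.mp hdisj (hv (Finset.mem_singleton_self v))) hvS

/-- In a connected W₂ graph other than K₂, every pair of vertices is avoided by some
maximum independent set. -/
theorem stmt6 {V : Type*} [Fintype V] (G : SimpleGraph V)
    (hconn : G.Connected) (hK2 : ¬ Nonempty (G ≃g (⊤ : SimpleGraph (Fin 2))))
    (h : W2 G) :
    ∀ u v : V, ∃ S : Finset V, IndepSet G S ∧ S.card = alpha G ∧ u ∉ S ∧ v ∉ S := by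
  classical
  intro u v
  by_cases huv : G.Adj u v
  · -- adjacent case: find a third neighbor
    by_cases hex : ∃ w, (G.Adj u w ∧ w ≠ v) ∨ (G.Adj v w ∧ w ≠ u)
    · obtain ⟨w, hw⟩ := hex
      rcases hw with ⟨haw, hne⟩ | ⟨haw, hne⟩
      · exact aux_adj G h haw hne
      · obtain ⟨S, h1, h2, h3, h4⟩ := aux_adj G h haw hne
        exact ⟨S, h1, h2, h4, h3⟩
    · -- then G ≅ K₂, contradiction
      exfalso
      push_neg at hex
      have hne : u ≠ v := huv.ne
      have key : ∀ (a x : V), G.Walk a x → (a = u ∨ a = v) → (x = u ∨ x = v) := by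
        intro a x p
        induction p with
        | nil => exact id
        | cons hadj p ih =>
          intro ha
          apply ih
          rcases ha with rfl | rfl
          · right; exact (hex _).1 hadj
          · left; exact (hex _).2 hadj
      have hall : ∀ x : V, x = u ∨ x = v := fun x =>
        key u x (hconn.preconnected u x).some (Or.inl rfl)
      refine hK2 ⟨⟨⟨fun x => if x = u then 0 else 1,
        fun i => if i = 0 then u else v, ?_, ?_⟩, ?_⟩⟩
      · intro x
        rcases hall x with rfl | rfl
        · simp
        · simp [Ne.symm hne]
      · intro i
        fin_cases i
        · simp
        · simp [Ne.symm hne]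
      · intro a b
        rcases hall a with rfl | rfl <;> rcases hall b with rfl | rfl <;>
          simp [hne, Ne.symm hne, huv, huv.symm, G.loopless]
  · -- non-adjacent: {u, v} is independent
    have hI : IndepSet G ({u, v} : Finset V) := by
      intro x hx y hy
      simp only [Finset.mem_insert, Finset.mem_singleton] at hx hy
      rcases hx with rfl | rfl <;> rcases hy with rfl | rfl
      · exact G.loopless.irrefl _
      · exact huv
      · exact fun hc => huv hc.symm
      · exact G.loopless.irrefl _
    obtain ⟨S₁, -, S₂, -, -, hI₂, -, hc₂, hdisj, hA, -⟩ :=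
      h {u, v} (Finset.subset_univ _) ∅ (Finset.subset_univ _)
        hI (by intro x hx; simp at hx) (Finset.disjoint_empty_right _)
    refine ⟨S₂, hI₂, hc₂, ?_, ?_⟩
    · exact fun hc => Finset.disjoint_left.mp hdisj (hA (by simp)) hc
    · exact fun hc => Finset.disjoint_left.mp hdisj (hA (by simp)) hc
end

section
/- If G is a connected graph in class W_2 with G ≠ K_2, then α(G) ≤ μ(G) and α(G) + μ(G) ≤ |V(G)| − 1, where μ(G) is the maximum matching number. -/
open Finset

/-- The matching number of G: the maximum number of edges of a matching in G. -/
noncomputable def matchNum {V : Type*} [Fintype V] (G : SimpleGraph V) : ℕ :=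
  sSup {n : ℕ | ∃ M : G.Subgraph, M.IsMatching ∧ M.edgeSet.ncard = n}

section AuxLemmas
set_option linter.unusedSectionVars false
variable {V : Type*} [Fintype V] {G : SimpleGraph V}

lemma indep_empty' : IndepSet G ∅ := by intro u hu; simp at hu

lemma indep_card_le_alpha {A : Finset V} (hA : IndepSet G A) : A.card ≤ alpha G := by
  classical
  refine Finset.le_sup ?_
  simp only [Finset.mem_filter, Finset.mem_powerset]
  exact ⟨Finset.subset_univ _, hA⟩

lemma indep_singleton_s7 (v : V) : IndepSet G {v} := by
  intro u hu w hw
  simp only [Finset.mem_singleton] at hu hw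
  subst hu; subst hw; exact G.irrefl

lemma shared_vertex {M : G.Subgraph} (hM : M.IsMatching) {e₁ e₂ : Sym2 V}
    (h1 : e₁ ∈ M.edgeSet) (h2 : e₂ ∈ M.edgeSet) {v : V} (hv1 : v ∈ e₁) (hv2 : v ∈ e₂) :
    e₁ = e₂ := by
  obtain ⟨a, rfl⟩ := Sym2.mem_iff_exists.mp hv1
  obtain ⟨b, rfl⟩ := Sym2.mem_iff_exists.mp hv2
  rw [SimpleGraph.Subgraph.mem_edgeSet] at h1 h2
  obtain ⟨w, -, hw⟩ := hM (M.edge_vert h1)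
  rw [hw _ h1, hw _ h2]

lemma exists_big_matching {S₁ S₂ : Finset V} (h1 : IndepSet G S₁) (h2 : IndepSet G S₂)
    (hd : Disjoint S₁ S₂) (hc1 : S₁.card = alpha G) (hc2 : S₂.card = alpha G) :
    ∃ M : G.Subgraph, M.IsMatching ∧ M.edgeSet.ncard = alpha G := by
  classical
  set t : {x // x ∈ S₁} → Finset V := fun x => S₂.filter (fun y => G.Adj x y) with ht
  have hall : ∀ s : Finset {x // x ∈ S₁}, s.card ≤ (s.biUnion t).card := by
    intro s
    set X : Finset V := s.image Subtype.val with hX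
    set Y := s.biUnion t with hY
    have hYS2 : Y ⊆ S₂ := by
      intro y hy
      simp only [hY, Finset.mem_biUnion, ht, Finset.mem_filter] at hy
      obtain ⟨x, -, hy2, -⟩ := hy
      exact hy2
    have hXS1 : X ⊆ S₁ := by
      intro x hx
      simp only [hX, Finset.mem_image] at hx
      obtain ⟨⟨x', hx'⟩, -, rfl⟩ := hx
      exact hx'
    have hindep : IndepSet G ((S₂ \ Y) ∪ X) := by
      intro a ha b hb hab
      simp only [Finset.mem_union, Finset.mem_sdiff] at ha hb
      rcases ha with ⟨ha2, haY⟩ | haX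
      · rcases hb with ⟨hb2, -⟩ | hbX
        · exact h2 a ha2 b hb2 hab
        · -- a ∈ S₂ \ Y, b ∈ X : then a ∈ t b so a ∈ Y
          apply haY
          simp only [hX, Finset.mem_image] at hbX
          obtain ⟨x, hx, rfl⟩ := hbX
          simp only [hY, Finset.mem_biUnion]
          exact ⟨x, hx, by simp [ht, ha2, hab.symm]⟩
      · rcases hb with ⟨hb2, hbY⟩ | hbX
        · apply hbY
          simp only [hX, Finset.mem_image] at haX
          obtain ⟨x, hx, rfl⟩ := haX
          simp only [hY, Finset.mem_biUnion]
          exact ⟨x, hx, by simp [ht, hb2, hab]⟩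
        · exact h1 a (hXS1 haX) b (hXS1 hbX) hab
    have hdisj : Disjoint (S₂ \ Y) X :=
      Finset.disjoint_left.mpr fun a ha hb =>
        (Finset.disjoint_right.mp hd (Finset.mem_sdiff.mp ha).1) (hXS1 hb)
    have hcard := indep_card_le_alpha hindep
    rw [Finset.card_union_of_disjoint hdisj, Finset.card_sdiff_of_subset hYS2] at hcard
    have hXcard : X.card = s.card := Finset.card_image_of_injective _ Subtype.val_injective
    have hYle : Y.card ≤ S₂.card := Finset.card_le_card hYS2
    omega
  obtain ⟨f, hinj, hf⟩ := (Finset.all_card_le_biUnion_card_iff_exists_injective t).mp hall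
  have hfS2 : ∀ x : {x // x ∈ S₁}, f x ∈ S₂ := fun x => (Finset.mem_filter.mp (hf x)).1
  have hfadj : ∀ x : {x // x ∈ S₁}, G.Adj x.1 (f x) := fun x => (Finset.mem_filter.mp (hf x)).2
  have hfnot : ∀ x : {x // x ∈ S₁}, f x ∉ S₁ := fun x hx => (Finset.disjoint_left.mp hd hx) (hfS2 x)
  let M : G.Subgraph :=
    { verts := ↑S₁ ∪ Set.range f
      Adj := fun a b => (∃ h : a ∈ S₁, f ⟨a, h⟩ = b) ∨ (∃ h : b ∈ S₁, f ⟨b, h⟩ = a)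
      adj_sub := by rintro a b (⟨h, rfl⟩ | ⟨h, rfl⟩)
                    · exact hfadj ⟨a, h⟩
                    · exact (hfadj ⟨b, h⟩).symm
      edge_vert := by rintro a b (⟨h, rfl⟩ | ⟨h, rfl⟩)
                      · exact Or.inl h
                      · exact Or.inr ⟨_, rfl⟩
      symm := by constructor; rintro a b (h | h)
                 · exact Or.inr h
                 · exact Or.inl h }
  have hMadj : ∀ a b : V, M.Adj a b ↔
      (∃ h : a ∈ S₁, f ⟨a, h⟩ = b) ∨ (∃ h : b ∈ S₁, f ⟨b, h⟩ = a) := fun a b => Iff.rfl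
  have hMverts : M.verts = ↑S₁ ∪ Set.range f := rfl
  refine ⟨M, ?_, ?_⟩
  · rintro v hv
    rw [hMverts] at hv
    rcases hv with hv | ⟨x, rfl⟩
    · refine ⟨f ⟨v, hv⟩, Or.inl ⟨hv, rfl⟩, ?_⟩
      rintro w hw
      rcases (hMadj v w).mp hw with ⟨h, rfl⟩ | ⟨h, hw'⟩
      · rfl
      · exact absurd (hw' ▸ hv) (hfnot ⟨w, h⟩)
    · refine ⟨x.1, Or.inr ⟨x.2, by simp⟩, ?_⟩
      rintro w hw
      rcases (hMadj _ w).mp hw with ⟨h, rfl⟩ | ⟨h, hw'⟩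
      · exact absurd h (hfnot x)
      · have : (⟨w, h⟩ : {x // x ∈ S₁}) = x := hinj hw'
        exact congrArg Subtype.val this
  · have hedge : M.edgeSet = ↑(S₁.attach.image (fun x => s(x.1, f x))) := by
      ext e
      induction e using Sym2.ind with
      | _ a b =>
        rw [SimpleGraph.Subgraph.mem_edgeSet, hMadj]
        simp only [Finset.coe_image, Set.mem_image, Finset.mem_coe, Finset.mem_attach]
        constructor
        · rintro (⟨h, rfl⟩ | ⟨h, rfl⟩)
          · exact ⟨⟨a, h⟩, by simp⟩
          · exact ⟨⟨b, h⟩, by simp [Sym2.eq_swap]⟩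
        · rintro ⟨x, -, hx⟩
          rw [Sym2.eq_iff] at hx
          rcases hx with ⟨rfl, rfl⟩ | ⟨rfl, rfl⟩
          · exact Or.inl ⟨x.2, by simp⟩
          · exact Or.inr ⟨x.2, by simp⟩
    rw [hedge, Set.ncard_coe_finset, Finset.card_image_of_injOn, Finset.card_attach, hc1]
    intro x _ y _ hxy
    rw [Sym2.eq_iff] at hxy
    rcases hxy with ⟨h1', -⟩ | ⟨h1', h2'⟩
    · exact Subtype.ext h1'
    · exact absurd (h1' ▸ x.2) (hfnot y)


lemma key_bound (hconn : G.Connected) (hK2 : ¬ Nonempty (G ≃g (⊤ : SimpleGraph (Fin 2))))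
    (h : W2 G) {S₁ S₂ : Finset V} (h1 : IndepSet G S₁) (h2 : IndepSet G S₂)
    (hd : Disjoint S₁ S₂) (hc1 : S₁.card = alpha G) (hc2 : S₂.card = alpha G)
    {M : G.Subgraph} (hM : M.IsMatching) :
    M.edgeSet.ncard + alpha G + 1 ≤ Fintype.card V := by
  classical
  have hneV : Nonempty V := hconn.nonempty
  by_contra hcon
  push_neg at hcon
  set E : Finset (Sym2 V) := M.edgeSet.toFinset with hE
  have hEncard : M.edgeSet.ncard = E.card := Set.ncard_eq_toFinset_card' M.edgeSet
  have hmemE : ∀ e, e ∈ E ↔ e ∈ M.edgeSet := by intro e; simp [hE]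
  have hcover : S₁ ∪ S₂ = Finset.univ := by
    -- step 1: choose for each edge an endpoint outside S₁
    have hex : ∀ e ∈ E, ∃ v, v ∈ e ∧ v ∉ S₁ := by
      intro e he
      induction e using Sym2.ind with
      | _ a b =>
        rw [hmemE, SimpleGraph.Subgraph.mem_edgeSet] at he
        have hG := M.adj_sub he
        by_cases ha : a ∈ S₁
        · exact ⟨b, by simp, fun hb => h1 a ha b hb hG⟩
        · exact ⟨a, by simp, ha⟩
    let g : Sym2 V → V := fun e =>
      if he : ∃ v, v ∈ e ∧ v ∉ S₁ then he.choose else Classical.arbitrary V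
    have hg : ∀ e ∈ E, g e ∈ e ∧ g e ∉ S₁ := by
      intro e he
      have hx := hex e he
      simp only [g, dif_pos hx]
      exact hx.choose_spec
    have hinj : Set.InjOn g ↑E := by
      intro e₁ h₁ e₂ h₂ hEq
      exact shared_vertex hM ((hmemE _).mp h₁) ((hmemE _).mp h₂) (hg e₁ h₁).1
        (hEq ▸ (hg e₂ h₂).1)
    set T : Finset V := Finset.univ \ S₁ with hT
    have hmap : ∀ e ∈ E, g e ∈ T := by
      intro e he; simp [hT, (hg e he).2]
    have hEle : E.card ≤ T.card := Finset.card_le_card_of_injOn g hmap hinj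
    have hTcard : T.card = Fintype.card V - alpha G := by
      rw [hT, Finset.card_sdiff_of_subset (Finset.subset_univ _), Finset.card_univ, hc1]
    have hαle : alpha G ≤ Fintype.card V := by
      rw [← hc1, ← Finset.card_univ]; exact Finset.card_le_card (Finset.subset_univ _)
    have hEeq : E.card + alpha G = Fintype.card V := by omega
    -- surjectivity
    have himg : E.image g = T := by
      apply Finset.eq_of_subset_of_card_le
      · intro v hv
        obtain ⟨e, he, rfl⟩ := Finset.mem_image.mp hv
        exact hmap e he
      · rw [Finset.card_image_of_injOn hinj]; omega
    -- every edge has an endpoint in S₁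
    have hS1end : ∀ e ∈ E, ∃ v, v ∈ e ∧ v ∈ S₁ := by
      intro e he
      by_contra hno
      push_neg at hno
      -- both endpoints outside S₁; the non-g endpoint is in T = image g
      obtain ⟨a, ha⟩ := Sym2.mem_iff_exists.mp (hg e he).1
      have hab : a ≠ g e := by
        have : M.Adj (g e) a := by
          rw [← SimpleGraph.Subgraph.mem_edgeSet, ← ha]; exact (hmemE _).mp he
        exact (M.adj_sub this).ne'
      have haT : a ∈ T := by
        simp only [hT, Finset.mem_sdiff, Finset.mem_univ, true_and]
        exact hno a (by rw [ha]; simp)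
      rw [← himg] at haT
      obtain ⟨e', he', hge'⟩ := Finset.mem_image.mp haT
      have : e' = e := shared_vertex hM ((hmemE _).mp he') ((hmemE _).mp he)
        (hge' ▸ (hg e' he').1) (by rw [ha]; simp [hge'.symm] )
      exact hab (by rw [← hge', this])
    -- injection into S₁ : E.card ≤ alpha
    let g' : Sym2 V → V := fun e =>
      if he : ∃ v, v ∈ e ∧ v ∈ S₁ then he.choose else Classical.arbitrary V
    have hg' : ∀ e ∈ E, g' e ∈ e ∧ g' e ∈ S₁ := by
      intro e he
      have hx := hS1end e he
      simp only [g', dif_pos hx]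
      exact hx.choose_spec
    have hinj' : Set.InjOn g' ↑E := by
      intro e₁ h₁ e₂ h₂ hEq
      exact shared_vertex hM ((hmemE _).mp h₁) ((hmemE _).mp h₂) (hg' e₁ h₁).1
        (hEq ▸ (hg' e₂ h₂).1)
    have hEleS : E.card ≤ alpha G := by
      rw [← hc1]
      exact Finset.card_le_card_of_injOn g' (fun e he => (hg' e he).2) hinj'
    -- now card V = E.card + α ≤ 2α and 2α ≤ card V
    apply Finset.eq_univ_of_card
    rw [Finset.card_union_of_disjoint hd, hc1, hc2]
    have h2α : 2 * alpha G ≤ Fintype.card V := by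
      rw [← Finset.card_univ]
      calc 2 * alpha G = (S₁ ∪ S₂).card := by
            rw [Finset.card_union_of_disjoint hd, hc1, hc2]; ring
        _ ≤ _ := Finset.card_le_card (Finset.subset_univ _)
    omega
  -- Now V = S₁ ⊔ S₂, both independent, |V| = 2α
  have hcard2α : Fintype.card V = 2 * alpha G := by
    rw [← Finset.card_univ, ← hcover, Finset.card_union_of_disjoint hd, hc1, hc2]; ring
  have hα1 : 1 ≤ alpha G := by
    obtain ⟨v⟩ := hneV
    simpa using indep_card_le_alpha (indep_singleton_s7 (G := G) v)
  by_cases hα : alpha G = 1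
  · -- |V| = 2, G ≅ K₂
    apply hK2
    have h2 : Fintype.card V = 2 := by omega
    have hadj : ∀ x y : V, x ≠ y → G.Adj x y := by
      intro x y hxy
      by_contra hnadj
      have hind : IndepSet G {x, y} := by
        intro u hu v hv huv
        simp only [Finset.mem_insert, Finset.mem_singleton] at hu hv
        rcases hu with rfl | rfl <;> rcases hv with rfl | rfl
        · exact G.irrefl huv
        · exact hnadj huv
        · exact hnadj huv.symm
        · exact G.irrefl huv
      have hle := indep_card_le_alpha hind
      rw [Finset.card_insert_of_notMem (by simp [hxy]), Finset.card_singleton, hα] at hle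
      omega
    exact ⟨⟨Fintype.equivFinOfCardEq h2, by
      intro x y
      simp only [SimpleGraph.top_adj, ne_eq, EmbeddingLike.apply_eq_iff_eq, Equiv.coe_fn_mk]
      constructor
      · exact fun hxy => hadj x y hxy
      · exact fun hxy => hxy.ne⟩⟩
  · -- α ≥ 2 : bipartition uniqueness contradiction
    have hα2 : 2 ≤ alpha G := by omega
    obtain ⟨u, hu, u', hu', huu'⟩ := Finset.one_lt_card.mp (by rw [hc1]; omega)
    obtain ⟨T₁, -, T₂, -, hT1, hT2, hTc1, hTc2, hTd, hsub1, hsub2⟩ :=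
      h {u} (Finset.subset_univ _) {u'} (Finset.subset_univ _) (indep_singleton_s7 u)
        (indep_singleton_s7 u') (by simp [huu'.symm, huu'])
    have hTcover : T₁ ∪ T₂ = Finset.univ := by
      apply Finset.eq_univ_of_card
      rw [Finset.card_union_of_disjoint hTd, hTc1, hTc2]
      have : alphaOn G Finset.univ = alpha G := rfl
      omega
    have flipS : ∀ {x y : V}, G.Adj x y → (x ∈ S₁ ↔ y ∉ S₁) := by
      intro x y hxy
      constructor
      · intro hx hy; exact h1 x hx y hy hxy
      · intro hy
        by_contra hx
        have hx2 : x ∈ S₂ := by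
          have := Finset.mem_univ x; rw [← hcover, Finset.mem_union] at this; tauto
        have hy2 : y ∈ S₂ := by
          have := Finset.mem_univ y; rw [← hcover, Finset.mem_union] at this; tauto
        exact h2 x hx2 y hy2 hxy
    have flipT : ∀ {x y : V}, G.Adj x y → (x ∈ T₁ ↔ y ∉ T₁) := by
      intro x y hxy
      constructor
      · intro hx hy; exact hT1 x hx y hy hxy
      · intro hy
        by_contra hx
        have hx2 : x ∈ T₂ := by
          have := Finset.mem_univ x; rw [← hTcover, Finset.mem_union] at this; tauto
        have hy2 : y ∈ T₂ := by
          have := Finset.mem_univ y; rw [← hTcover, Finset.mem_union] at this; tauto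
        exact hT2 x hx2 y hy2 hxy
    have walkkey : ∀ {a b : V} (_ : G.Walk a b), (a ∈ S₁ ↔ a ∈ T₁) → (b ∈ S₁ ↔ b ∈ T₁) := by
      intro a b w
      induction w with
      | nil => exact id
      | cons hadj p ih =>
        intro hab
        apply ih
        have hS := flipS hadj
        have hT := flipT hadj
        tauto
    have hw := walkkey (hconn u u').some (by
      constructor
      · intro _; exact hsub1 (Finset.mem_singleton_self u)
      · intro _; exact hu)
    have hu'T1 : u' ∈ T₁ := hw.mp hu'
    have hu'T2 : u' ∈ T₂ := hsub2 (Finset.mem_singleton_self u')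
    exact (Finset.disjoint_left.mp hTd hu'T1) hu'T2

end AuxLemmas

/-- In a connected W₂ graph other than K₂, α(G) ≤ μ(G) and α(G) + μ(G) ≤ |V(G)| - 1. -/
theorem stmt7 {V : Type*} [Fintype V] (G : SimpleGraph V)
    (hconn : G.Connected) (hK2 : ¬ Nonempty (G ≃g (⊤ : SimpleGraph (Fin 2))))
    (h : W2 G) :
    alpha G ≤ matchNum G ∧ alpha G + matchNum G + 1 ≤ Fintype.card V := by
  classical
  have hneV : Nonempty V := hconn.nonempty
  obtain ⟨S₁, -, S₂, -, h1, h2, hc1, hc2, hd, -, -⟩ :=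
    h ∅ (Finset.empty_subset _) ∅ (Finset.empty_subset _) indep_empty' indep_empty'
      (Finset.disjoint_empty_left _)
  obtain ⟨M, hM, hMcard⟩ := exists_big_matching h1 h2 hd hc1 hc2
  set S : Set ℕ := {n : ℕ | ∃ M : G.Subgraph, M.IsMatching ∧ M.edgeSet.ncard = n} with hS
  have hbot : (0 : ℕ) ∈ S := by
    refine ⟨⊥, ?_, by simp⟩
    intro v hv
    simp [SimpleGraph.Subgraph.verts_bot] at hv
  have hbdd : BddAbove S := by
    refine ⟨Fintype.card (Sym2 V), ?_⟩
    rintro n ⟨N, -, rfl⟩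
    calc N.edgeSet.ncard ≤ (Set.univ : Set (Sym2 V)).ncard :=
          Set.ncard_le_ncard (Set.subset_univ _) Set.finite_univ
      _ = Fintype.card (Sym2 V) := by rw [Set.ncard_univ, Nat.card_eq_fintype_card]
  have hle : alpha G ≤ matchNum G := le_csSup hbdd ⟨M, hM, hMcard⟩
  refine ⟨hle, ?_⟩
  have hCn : ∀ n ∈ S, n + alpha G + 1 ≤ Fintype.card V := by
    rintro n ⟨N, hN, rfl⟩
    exact key_bound hconn hK2 h h1 h2 hd hc1 hc2 hN
  have h0 := hCn 0 hbot
  have hmle : matchNum G ≤ Fintype.card V - alpha G - 1 := by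
    apply csSup_le ⟨0, hbot⟩
    intro n hn
    have := hCn n hn
    omega
  omega
end

section
/- If G is a connected graph in class W_2 with G ≠ K_2, then α(G) = α(G − S) for every independent set S of G, where G − S is the subgraph induced on V(G) \ S. -/
open Finset

/-- In a connected W₂ graph other than K₂, α(G) = α(G - S) for every independent set S. -/
theorem stmt8 {V : Type*} [Fintype V] [DecidableEq V] (G : SimpleGraph V)
    (hconn : G.Connected) (hK2 : ¬ Nonempty (G ≃g (⊤ : SimpleGraph (Fin 2))))
    (h : W2 G) :
    ∀ S : Finset V, IndepSet G S → alphaOn G (Finset.univ \ S) = alpha G := by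
  classical
  intro S hS
  refine le_antisymm ?_ ?_
  · apply Finset.sup_le
    intro A hA
    simp only [Finset.mem_filter, Finset.mem_powerset] at hA
    apply Finset.le_sup (f := Finset.card)
    simp only [Finset.mem_filter, Finset.mem_powerset]
    exact ⟨Finset.subset_univ A, hA.2⟩
  · obtain ⟨S₁, hS₁u, S₂, hS₂u, hi₁, hi₂, hc₁, hc₂, hdisj, hSS₁, -⟩ :=
      h S (Finset.subset_univ S) ∅ (Finset.empty_subset _) hS
        (by intro u hu; simp at hu) (Finset.disjoint_empty_right S)
    have hS₂sub : S₂ ⊆ Finset.univ \ S := by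
      intro v hv
      simp only [Finset.mem_sdiff, Finset.mem_univ, true_and]
      intro hvS
      exact (Finset.disjoint_left.mp hdisj (hSS₁ hvS) hv)
    calc alpha G = S₂.card := hc₂.symm
      _ ≤ alphaOn G (Finset.univ \ S) := by
          apply Finset.le_sup (f := Finset.card)
          simp only [Finset.mem_filter, Finset.mem_powerset]
          exact ⟨hS₂sub, hi₂⟩
end

section
/- If G is a connected graph in class W_2 with G ≠ K_2, then the differential ∂ is monotone on independent sets: if A ⊆ B and B is independent, then |N(A)| − |A| ≤ |N(B)| − |B|. -/
open Finset

lemma card_le_alpha {V : Type*} [Fintype V] {G : SimpleGraph V} {A : Finset V}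
    (hA : IndepSet G A) : A.card ≤ alphaOn G Finset.univ := by
  classical
  apply Finset.le_sup (f := Finset.card)
  simp [Finset.mem_filter, Finset.mem_powerset, hA]

lemma nbhd_mono {V : Type*} [Fintype V] {G : SimpleGraph V} {A B : Finset V}
    (hAB : A ⊆ B) : nbhd G A ⊆ nbhd G B := by
  classical
  intro x hx
  simp only [nbhd, Finset.mem_filter, Finset.mem_univ, true_and] at hx ⊢
  obtain ⟨u, hu, hadj⟩ := hx
  exact ⟨u, hAB hu, hadj⟩

lemma key_lemma {V : Type*} [Fintype V] [DecidableEq V] {G : SimpleGraph V} (h : W2 G)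
    {A : Finset V} {v : V} (hv : v ∉ A) (hind : IndepSet G (insert v A)) :
    ∃ w, G.Adj v w ∧ w ∉ nbhd G A := by
  classical
  by_contra hcon
  push_neg at hcon
  have hAi : IndepSet G A := indep_subset (Finset.subset_insert v A) hind
  have hvi : IndepSet G ({v} : Finset V) := by
    intro u hu w hw
    simp only [Finset.mem_singleton] at hu hw
    subst hu; subst hw; exact G.loopless.irrefl _
  have hdisj : Disjoint ({v} : Finset V) A :=
    Finset.disjoint_singleton_left.mpr hv
  obtain ⟨S₁, _, S₂, _, hS₁i, hS₂i, hS₁c, hS₂c, hdS, hvS₁, hAS₂⟩ :=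
    h {v} (Finset.subset_univ _) A (Finset.subset_univ _) hvi hAi hdisj
  have hvS₂ : v ∉ S₂ := by
    intro hmem
    exact (Finset.disjoint_left.mp hdS) (hvS₁ (Finset.mem_singleton_self v)) hmem
  have hnb : ∃ w ∈ S₂, G.Adj v w := by
    by_contra hno
    push_neg at hno
    have hins : IndepSet G (insert v S₂) := by
      intro a ha b hb hadj
      simp only [Finset.mem_insert] at ha hb
      rcases ha with ha | ha
      · subst ha
        rcases hb with hb | hb
        · subst hb; exact G.loopless.irrefl _ hadj
        · exact hno b hb hadj
      · rcases hb with hb | hb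
        · subst hb; exact hno a ha hadj.symm
        · exact hS₂i a ha b hb hadj
    have hle := card_le_alpha hins
    rw [Finset.card_insert_of_notMem hvS₂, hS₂c] at hle
    omega
  obtain ⟨w, hwS₂, hadj⟩ := hnb
  have hwN : w ∈ nbhd G A := hcon w hadj
  simp only [nbhd, Finset.mem_filter, Finset.mem_univ, true_and] at hwN
  obtain ⟨a, haA, hadj'⟩ := hwN
  exact hS₂i a (hAS₂ haA) w hwS₂ hadj'

lemma step_lemma {V : Type*} [Fintype V] [DecidableEq V] {G : SimpleGraph V} (h : W2 G)
    {A : Finset V} {v : V} (hv : v ∉ A) (hind : IndepSet G (insert v A)) :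
    (nbhd G A).card + 1 ≤ (nbhd G (insert v A)).card := by
  classical
  obtain ⟨w, hadj, hwn⟩ := key_lemma h hv hind
  have hwmem : w ∈ nbhd G (insert v A) := by
    simp only [nbhd, Finset.mem_filter, Finset.mem_univ, true_and]
    exact ⟨v, Finset.mem_insert_self v A, hadj⟩
  have hsub : insert w (nbhd G A) ⊆ nbhd G (insert v A) := by
    intro x hx
    rcases Finset.mem_insert.mp hx with rfl | hx
    · exact hwmem
    · exact nbhd_mono (Finset.subset_insert v A) hx
  calc (nbhd G A).card + 1 = (insert w (nbhd G A)).card := by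
        rw [Finset.card_insert_of_notMem hwn]
    _ ≤ (nbhd G (insert v A)).card := Finset.card_le_card hsub

/-- In a connected W₂ graph other than K₂, the differential ∂(A) = |N(A)| - |A| is
monotone over independent sets. -/
theorem stmt9 {V : Type*} [Fintype V] (G : SimpleGraph V)
    (hconn : G.Connected) (hK2 : ¬ Nonempty (G ≃g (⊤ : SimpleGraph (Fin 2))))
    (h : W2 G) :
    ∀ A B : Finset V, A ⊆ B → IndepSet G B →
      ((nbhd G A).card : ℤ) - (A.card : ℤ) ≤ ((nbhd G B).card : ℤ) - (B.card : ℤ) := by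
  classical
  intro A B hAB hB
  suffices H : ∀ n : ℕ, ∀ A : Finset V, A ⊆ B → (B \ A).card = n →
      ((nbhd G A).card : ℤ) - (A.card : ℤ) ≤ ((nbhd G B).card : ℤ) - (B.card : ℤ) by
    exact H _ A hAB rfl
  intro n
  induction n with
  | zero =>
    intro A hAB hcard
    have hempty : B \ A = ∅ := Finset.card_eq_zero.mp hcard
    have hEq : A = B :=
      Finset.Subset.antisymm hAB (Finset.sdiff_eq_empty_iff_subset.mp hempty)
    subst hEq
    exact le_refl _
  | succ n ih =>
    intro A hAB hcard
    have hne : (B \ A).Nonempty := by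
      rw [← Finset.card_pos, hcard]; omega
    obtain ⟨v, hv⟩ := hne
    have hvB : v ∈ B := (Finset.mem_sdiff.mp hv).1
    have hvA : v ∉ A := (Finset.mem_sdiff.mp hv).2
    have hsub : insert v A ⊆ B := Finset.insert_subset hvB hAB
    have hind : IndepSet G (insert v A) := indep_subset hsub hB
    have hstep := step_lemma h hvA hind
    have hcard' : (B \ insert v A).card = n := by
      rw [Finset.sdiff_insert, Finset.card_erase_of_mem hv, hcard]; omega
    have hih := ih (insert v A) hsub hcard'
    have hc : (insert v A).card = A.card + 1 := Finset.card_insert_of_notMem hvA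
    have hstep' : ((nbhd G A).card : ℤ) - A.card ≤
        ((nbhd G (insert v A)).card : ℤ) - (insert v A).card := by
      rw [hc]; push_cast; omega
    linarith
end

section
/- If G is a connected graph in class W_2 with G ≠ K_2, then |A| ≤ α(G[N(A)]) for every independent set A, i.e., the subgraph induced on the neighborhood of A contains an independent set of size at least |A|. -/
open Finset

/-- In a connected W₂ graph other than K₂, |A| ≤ α(G[N(A)]) for every independent set A. -/
theorem stmt11 {V : Type*} [Fintype V] (G : SimpleGraph V)
    (hconn : G.Connected) (hK2 : ¬ Nonempty (G ≃g (⊤ : SimpleGraph (Fin 2))))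
    (h : W2 G) :
    ∀ A : Finset V, IndepSet G A → A.card ≤ alphaOn G (nbhd G A) := by
  classical
  intro A hA
  obtain ⟨S₁, hS₁u, S₂, hS₂u, hS₁i, hS₂i, hS₁c, hS₂c, hdisj, hAS₁, -⟩ :=
    h A (Finset.subset_univ A) ∅ (Finset.subset_univ ∅) hA
      (by intro u hu; simp at hu) (Finset.disjoint_empty_right A)
  have hAd : Disjoint A S₂ := hdisj.mono_left hAS₁
  set N := nbhd G A with hN
  set T := S₂ ∩ N with hT
  -- S' := (S₂ \ N) ∪ A is independent
  set S' := (S₂ \ N) ∪ A with hS'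
  have hS'i : IndepSet G S' := by
    intro u hu v hv hadj
    rcases Finset.mem_union.1 hu with hu | hu <;> rcases Finset.mem_union.1 hv with hv | hv
    · exact hS₂i u (Finset.mem_sdiff.1 hu).1 v (Finset.mem_sdiff.1 hv).1 hadj
    · exact (Finset.mem_sdiff.1 hu).2 (by
        simp only [hN, nbhd, Finset.mem_filter, Finset.mem_univ, true_and]
        exact ⟨v, hv, hadj.symm⟩)
    · exact (Finset.mem_sdiff.1 hv).2 (by
        simp only [hN, nbhd, Finset.mem_filter, Finset.mem_univ, true_and]
        exact ⟨u, hu, hadj⟩)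
    · exact hA u hu v hv hadj
  have hcard : S'.card = (S₂ \ N).card + A.card := by
    rw [Finset.card_union_of_disjoint]
    exact Finset.disjoint_left.2 fun x hx hxA =>
      Finset.disjoint_left.1 hAd hxA (Finset.mem_sdiff.1 hx).1
  have hS'le : S'.card ≤ alphaOn G Finset.univ := by
    apply Finset.le_sup (f := Finset.card)
    simp only [Finset.mem_filter, Finset.mem_powerset]
    exact ⟨Finset.subset_univ _, hS'i⟩
  have hsplit : (S₂ \ N).card + T.card = S₂.card := by
    rw [hT, Finset.card_sdiff_add_card_inter]
  have hAT : A.card ≤ T.card := by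
    have : (S₂ \ N).card + A.card ≤ (S₂ \ N).card + T.card := by
      rw [hsplit, hS₂c, ← hcard]; exact hS'le
    omega
  have hTle : T.card ≤ alphaOn G N := by
    apply Finset.le_sup (f := Finset.card)
    simp only [Finset.mem_filter, Finset.mem_powerset]
    refine ⟨Finset.inter_subset_right, ?_⟩
    intro u hu v hv
    exact hS₂i u (Finset.mem_inter.1 hu).1 v (Finset.mem_inter.1 hv).1
  exact hAT.trans hTle
end

section
/- K_2 is the unique connected graph in class W_2 whose number of vertices equals twice its independence number. -/
open Finset

lemma indep_le_alpha {V : Type*} [Fintype V] {G : SimpleGraph V} {A : Finset V}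
    (hA : IndepSet G A) : A.card ≤ alpha G := by
  classical
  exact Finset.le_sup (f := Finset.card)
    (Finset.mem_filter.2 ⟨Finset.mem_powerset.2 (Finset.subset_univ A), hA⟩)

lemma key_deg_one {V : Type*} [Fintype V] {G : SimpleGraph V}
    (h : W2 G) (hcard : Fintype.card V = 2 * alpha G)
    {S S' : Finset V} (hS : IndepSet G S) (hS' : IndepSet G S')
    (hcS : S.card = alpha G) (hcS' : S'.card = alpha G)
    {v : V} (hv : v ∈ S) (hv' : v ∉ S') :
    ∃ w, G.Adj v w ∧ ∀ x, G.Adj v x → x = w := by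
  classical
  -- v has a neighbor in S'
  have hex : ∃ u ∈ S', G.Adj v u := by
    by_contra hno
    push_neg at hno
    have hindep : IndepSet G (insert v S') := by
      intro a ha b hb hab
      rw [Finset.mem_insert] at ha hb
      rcases ha with ha | ha
      · subst ha
        rcases hb with hb | hb
        · subst hb; exact G.loopless.irrefl _ hab
        · exact hno b hb hab
      · rcases hb with hb | hb
        · subst hb; exact hno a ha hab.symm
        · exact hS' a ha b hb hab
    have := indep_le_alpha hindep
    rw [Finset.card_insert_of_notMem hv', hcS'] at this
    omega
  obtain ⟨u, huS', hadj⟩ := hex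
  -- apply W2 to {v} and S.erase v
  obtain ⟨T₁, -, T₂, -, hT₁, hT₂, hc₁, hc₂, hdisj, hsub₁, hsub₂⟩ :=
    h {v} (Finset.subset_univ _) (S.erase v) (Finset.subset_univ _)
      (by intro a ha b hb hab
          rw [Finset.mem_singleton] at ha hb
          subst ha; subst hb; exact G.loopless.irrefl _ hab)
      (fun a ha b hb => hS a (Finset.mem_of_mem_erase ha) b (Finset.mem_of_mem_erase hb))
      (by simp)
  have halpha : alphaOn G Finset.univ = alpha G := rfl
  rw [halpha] at hc₁ hc₂
  have hv₁ : v ∈ T₁ := hsub₁ (Finset.mem_singleton_self v)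
  have hunion : T₁ ∪ T₂ = Finset.univ := by
    apply Finset.eq_univ_of_card
    rw [Finset.card_union_of_disjoint hdisj, hc₁, hc₂, hcard]
    ring
  have hα : 1 ≤ alpha G := by
    rw [← hcS]
    exact Finset.card_pos.2 ⟨v, hv⟩
  have hcarderase : (S.erase v).card = alpha G - 1 := by
    rw [Finset.card_erase_of_mem hv, hcS]
  have hsdiff : (T₂ \ S.erase v).card = 1 := by
    rw [Finset.card_sdiff_of_subset hsub₂, hc₂, hcarderase]
    omega
  obtain ⟨w, hw⟩ := Finset.card_eq_one.1 hsdiff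
  have huniq : ∀ x, G.Adj v x → x = w := by
    intro x hx
    have hxT₁ : x ∉ T₁ := fun hxT₁ => hT₁ v hv₁ x hxT₁ hx
    have hxT₂ : x ∈ T₂ := by
      have hxu : x ∈ T₁ ∪ T₂ := hunion ▸ Finset.mem_univ x
      rcases Finset.mem_union.1 hxu with h1 | h2
      · exact absurd h1 hxT₁
      · exact h2
    have hxS : x ∉ S := fun hxS => hS v hv x hxS hx
    have hmem : x ∈ T₂ \ S.erase v :=
      Finset.mem_sdiff.2 ⟨hxT₂, fun hmem => hxS (Finset.mem_of_mem_erase hmem)⟩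
    rw [hw] at hmem
    exact Finset.mem_singleton.1 hmem
  exact ⟨w, (huniq u hadj) ▸ hadj, huniq⟩

/-- K₂ is the unique connected W₂ graph of order 2α(G). -/
theorem stmt13 {V : Type*} [Fintype V] (G : SimpleGraph V)
    (hconn : G.Connected) (h : W2 G) (hcard : Fintype.card V = 2 * alpha G) :
    Nonempty (G ≃g (⊤ : SimpleGraph (Fin 2))) := by
  classical
  obtain ⟨S₁, -, S₂, -, hS₁, hS₂, hc₁, hc₂, hdisj, -, -⟩ :=
    h ∅ (Finset.empty_subset _) ∅ (Finset.empty_subset _)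
      (fun a ha => absurd ha (Finset.notMem_empty a))
      (fun a ha => absurd ha (Finset.notMem_empty a))
      (Finset.disjoint_empty_left _)
  have halpha : alphaOn G Finset.univ = alpha G := rfl
  rw [halpha] at hc₁ hc₂
  have hne : Nonempty V := hconn.nonempty
  obtain ⟨v₀⟩ := hne
  have hunion : S₁ ∪ S₂ = Finset.univ := by
    apply Finset.eq_univ_of_card
    rw [Finset.card_union_of_disjoint hdisj, hc₁, hc₂, hcard]
    ring
  have hdeg : ∀ v : V, ∃ w, G.Adj v w ∧ ∀ x, G.Adj v x → x = w := by
    intro v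
    have hvu : v ∈ S₁ ∪ S₂ := hunion ▸ Finset.mem_univ v
    rcases Finset.mem_union.1 hvu with h1 | h2
    · exact key_deg_one h hcard hS₁ hS₂ hc₁ hc₂ h1 (Finset.disjoint_left.1 hdisj h1)
    · exact key_deg_one h hcard hS₂ hS₁ hc₂ hc₁ h2 (Finset.disjoint_right.1 hdisj h2)
  obtain ⟨w₀, hadj₀, huniq₀⟩ := hdeg v₀
  obtain ⟨w₁, hadj₁, huniq₁⟩ := hdeg w₀
  have hw₁ : w₁ = v₀ := (huniq₁ v₀ hadj₀.symm).symm
  have hclosed : ∀ x y, G.Adj x y → x ∈ ({v₀, w₀} : Finset V) → y ∈ ({v₀, w₀} : Finset V) := by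
    intro x y hxy hx
    rcases Finset.mem_insert.1 hx with rfl | hx
    · rw [huniq₀ y hxy]; simp
    · rw [Finset.mem_singleton] at hx; subst hx
      rw [huniq₁ y hxy, hw₁]; simp
  have walklem : ∀ {a b : V}, G.Walk a b → a ∈ ({v₀, w₀} : Finset V) →
      b ∈ ({v₀, w₀} : Finset V) := by
    intro a b p
    induction p with
    | nil => exact id
    | cons hadj _ ih => intro ha; exact ih (hclosed _ _ hadj ha)
  have hall : ∀ x, x ∈ ({v₀, w₀} : Finset V) := by
    intro x
    obtain ⟨p⟩ := hconn v₀ x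
    exact walklem p (by simp)
  have hvw : v₀ ≠ w₀ := G.ne_of_adj hadj₀
  have hcard2 : Fintype.card V = 2 := by
    have huqeq : (Finset.univ : Finset V) = {v₀, w₀} := (Finset.eq_univ_iff_forall.2 hall).symm
    rw [← Finset.card_univ, huqeq,
      Finset.card_insert_of_notMem (by simp [hvw]), Finset.card_singleton]
  have hadjiff : ∀ x y : V, G.Adj x y ↔ x ≠ y := by
    intro x y
    constructor
    · exact G.ne_of_adj
    · intro hxy
      have hx := hall x
      have hy := hall y
      simp only [Finset.mem_insert, Finset.mem_singleton] at hx hy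
      rcases hx with rfl | rfl <;> rcases hy with rfl | rfl
      · exact absurd rfl hxy
      · exact hadj₀
      · exact hadj₀.symm
      · exact absurd rfl hxy
  let e : V ≃ Fin 2 := Fintype.equivFinOfCardEq hcard2
  exact ⟨{ toEquiv := e,
           map_rel_iff' := by
             intro x y
             simp only [SimpleGraph.top_adj, ne_eq, EmbeddingLike.apply_eq_iff_eq, hadjiff] }⟩
end

section
/- A vertex v of a graph G is a shedding vertex if and only if ε_{G−v}(A) = ε_G(A) for every independent set A of G − v, where ε_H(A) is the maximum size of an independent set of H containing A. -/
open Finset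

/-- v is a shedding vertex of G: every independent set of G - N[v] can be enlarged by a
neighbor of v. -/
def Shedding {V : Type*} [DecidableEq V] (G : SimpleGraph V) (v : V) : Prop :=
  ∀ S : Finset V, IndepSet G S → (∀ x ∈ S, x ≠ v ∧ ¬ G.Adj v x) →
    ∃ u, G.Adj v u ∧ IndepSet G (insert u S)

open scoped Classical in
/-- ε: for a vertex subset `s` and an independent set `A ⊆ s`, the maximum size of an
independent set S with A ⊆ S ⊆ s. -/
noncomputable def epsOn {V : Type*} [Fintype V] (G : SimpleGraph V) (s A : Finset V) : ℕ :=
  ((s.powerset).filter (fun S => IndepSet G S ∧ A ⊆ S)).sup Finset.card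

lemma indepSet_mono {V : Type*} {G : SimpleGraph V} {S T : Finset V}
    (h : S ⊆ T) (hT : IndepSet G T) : IndepSet G S :=
  fun a ha b hb => hT a (h ha) b (h hb)

open scoped Classical in
lemma le_epsOn {V : Type*} [Fintype V] (G : SimpleGraph V) {s A S : Finset V}
    (h1 : S ⊆ s) (h2 : IndepSet G S) (h3 : A ⊆ S) : S.card ≤ epsOn G s A :=
  Finset.le_sup (by simp [Finset.mem_filter, Finset.mem_powerset, h1, h2, h3])

open scoped Classical in
lemma epsOn_spec {V : Type*} [Fintype V] (G : SimpleGraph V) {s A : Finset V}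
    (h1 : A ⊆ s) (h2 : IndepSet G A) :
    ∃ S, S ⊆ s ∧ IndepSet G S ∧ A ⊆ S ∧ S.card = epsOn G s A := by
  have hne : ((s.powerset).filter (fun S => IndepSet G S ∧ A ⊆ S)).Nonempty :=
    ⟨A, Finset.mem_filter.2 ⟨Finset.mem_powerset.2 h1, h2, Finset.Subset.refl _⟩⟩
  obtain ⟨S, hS, hcard⟩ := Finset.exists_mem_eq_sup _ hne Finset.card
  rw [Finset.mem_filter, Finset.mem_powerset] at hS
  exact ⟨S, hS.1, hS.2.1, hS.2.2, hcard.symm⟩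

open scoped Classical in
lemma epsOn_mono {V : Type*} [Fintype V] (G : SimpleGraph V) {s t A : Finset V}
    (h : s ⊆ t) : epsOn G s A ≤ epsOn G t A :=
  Finset.sup_mono (Finset.filter_subset_filter _ (Finset.powerset_mono.2 h))

/-- v is a shedding vertex iff ε is unchanged by deleting v, on every independent set of
G - v. -/
theorem stmt15 {V : Type*} [Fintype V] [DecidableEq V] (G : SimpleGraph V) (v : V) :
    Shedding G v ↔
      ∀ A ⊆ Finset.univ.erase v, IndepSet G A →
        epsOn G (Finset.univ.erase v) A = epsOn G Finset.univ A := by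
  classical
  constructor
  · intro hShed A hA hAind
    refine le_antisymm (epsOn_mono G (Finset.erase_subset _ _)) ?_
    obtain ⟨S, hSs, hSind, hAS, hScard⟩ := epsOn_spec G (Finset.subset_univ A) hAind
    rw [← hScard]
    by_cases hv : v ∈ S
    · have hfar : ∀ x ∈ S.erase v, x ≠ v ∧ ¬ G.Adj v x := by
        intro x hx
        obtain ⟨hxv, hxS⟩ := Finset.mem_erase.1 hx
        exact ⟨hxv, fun h => hSind v hv x hxS h⟩
      obtain ⟨u, huv, huind⟩ := hShed (S.erase v)
        (indepSet_mono (Finset.erase_subset _ _) hSind) hfar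
      have huS : u ∉ S.erase v := fun h => (hfar u h).2 huv
      have hne : u ≠ v := fun h => G.irrefl (h ▸ huv)
      have hsub : insert u (S.erase v) ⊆ Finset.univ.erase v := by
        intro x hx
        rcases Finset.mem_insert.1 hx with rfl | hx
        · exact Finset.mem_erase.2 ⟨hne, Finset.mem_univ _⟩
        · exact Finset.mem_erase.2 ⟨(Finset.mem_erase.1 hx).1, Finset.mem_univ _⟩
      have hAsub : A ⊆ insert u (S.erase v) := by
        intro x hx
        exact Finset.mem_insert.2 (Or.inr (Finset.mem_erase.2
          ⟨(Finset.mem_erase.1 (hA hx)).1, hAS hx⟩))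
      have := le_epsOn G hsub huind hAsub
      rwa [Finset.card_insert_of_notMem huS, Finset.card_erase_of_mem hv,
        Nat.sub_add_cancel (Finset.card_pos.2 ⟨v, hv⟩)] at this
    · exact le_epsOn G (fun x hx => Finset.mem_erase.2
        ⟨fun h => hv (h ▸ hx), Finset.mem_univ _⟩) hSind hAS
  · intro heps S hSind hSfar
    have hSsub : S ⊆ Finset.univ.erase v :=
      fun x hx => Finset.mem_erase.2 ⟨(hSfar x hx).1, Finset.mem_univ x⟩
    have hvS : v ∉ S := fun h => (hSfar v h).1 rfl
    have hins : IndepSet G (insert v S) := by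
      intro a ha b hb hadj
      rcases Finset.mem_insert.1 ha with ha' | ha' <;>
        rcases Finset.mem_insert.1 hb with hb' | hb'
      · exact G.irrefl (ha' ▸ hb' ▸ hadj)
      · exact (hSfar _ hb').2 (ha' ▸ hadj)
      · exact (hSfar _ ha').2 (hb' ▸ hadj.symm)
      · exact hSind a ha' b hb' hadj
    have h1 : S.card + 1 ≤ epsOn G Finset.univ S := by
      have := le_epsOn G (Finset.subset_univ _) hins (Finset.subset_insert _ _)
      rwa [Finset.card_insert_of_notMem hvS] at this
    rw [← heps S hSsub hSind] at h1
    obtain ⟨T, hTs, hTind, hST, hTcard⟩ := epsOn_spec G hSsub hSind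
    by_contra hcon
    push_neg at hcon
    have hadjT : ∀ u ∈ T, ¬ G.Adj v u := by
      intro u hu hadj
      refine hcon u hadj (indepSet_mono ?_ hTind)
      intro x hx
      rcases Finset.mem_insert.1 hx with rfl | hx
      · exact hu
      · exact hST hx
    have hvT : v ∉ T := fun h => (Finset.mem_erase.1 (hTs h)).1 rfl
    have hinsT : IndepSet G (insert v T) := by
      intro a ha b hb hadj
      rcases Finset.mem_insert.1 ha with ha' | ha' <;>
        rcases Finset.mem_insert.1 hb with hb' | hb'
      · exact G.irrefl (ha' ▸ hb' ▸ hadj)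
      · exact hadjT _ hb' (ha' ▸ hadj)
      · exact hadjT _ ha' (hb' ▸ hadj.symm)
      · exact hTind a ha' b hb' hadj
    have h2 : T.card + 1 ≤ epsOn G Finset.univ S := by
      have := le_epsOn G (Finset.subset_univ _) hinsT
        (hST.trans (Finset.subset_insert _ _))
      rwa [Finset.card_insert_of_notMem hvT] at this
    rw [← heps S hSsub hSind, ← hTcard] at h2
    omega
end

section
/- Let G be a graph and let L be the corona of G with a family {H_v : v ∈ V(G)} of complete graphs each having at least two vertices. Then for every non-maximum independent set A of L and every vertex b ∉ A, there exists a maximum independent set S of L with A ⊆ S and b ∉ S. -/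
open Finset

/-- The corona of G with the family of complete graphs {K_{p v} : v ∈ V(G)}: the disjoint
union of G and the complete graphs, with each v joined to all vertices of its K_{p v}. -/
def Corona {V : Type*} (G : SimpleGraph V) (p : V → ℕ) :
    SimpleGraph (V ⊕ (Σ v : V, Fin (p v))) :=
  SimpleGraph.fromRel (fun a b =>
    match a, b with
    | Sum.inl u, Sum.inl w => G.Adj u w
    | Sum.inl u, Sum.inr w => u = w.1
    | Sum.inr u, Sum.inr w => u.1 = w.1
    | Sum.inr _, Sum.inl _ => False)

def clv {V : Type*} {p : V → ℕ} : (V ⊕ (Σ v : V, Fin (p v))) → V := Sum.elim id Sigma.fst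

lemma corona_adj_of_same {V : Type*} (G : SimpleGraph V) (p : V → ℕ)
    {x y : V ⊕ (Σ v : V, Fin (p v))} (hne : x ≠ y)
    (h : clv x = clv y) : (Corona G p).Adj x y := by
  rw [Corona, SimpleGraph.fromRel_adj]
  refine ⟨hne, ?_⟩
  cases x with
  | inl u =>
    cases y with
    | inl w => simp only [clv, Sum.elim_inl] at h; exact absurd (congrArg Sum.inl h) hne
    | inr w => left; exact h
  | inr u =>
    cases y with
    | inl w => right; exact h.symm
    | inr w => left; exact h

lemma corona_adj_cross {V : Type*} (G : SimpleGraph V) (p : V → ℕ)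
    {x y : V ⊕ (Σ v : V, Fin (p v))} (h : (Corona G p).Adj x y) (hc : clv x ≠ clv y) :
    ∃ u w, x = Sum.inl u ∧ y = Sum.inl w ∧ G.Adj u w := by
  rw [Corona, SimpleGraph.fromRel_adj] at h
  obtain ⟨-, hr⟩ := h
  cases x with
  | inl u =>
    cases y with
    | inl w =>
      refine ⟨u, w, rfl, rfl, ?_⟩
      rcases hr with h | h
      · exact h
      · exact h.symm
    | inr w => exact absurd (by rcases hr with h | h; exact h; exact h.elim) hc
  | inr u =>
    cases y with
    | inl w => exact absurd (by rcases hr with h | h; exact h.elim; exact h.symm) hc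
    | inr w => exact absurd (by rcases hr with h | h; exact h; exact h.symm) hc

lemma clv_injOn {V : Type*} (G : SimpleGraph V) (p : V → ℕ)
    {A : Finset (V ⊕ (Σ v : V, Fin (p v)))} (hA : IndepSet (Corona G p) A) :
    Set.InjOn clv (A : Set (V ⊕ (Σ v : V, Fin (p v)))) := by
  intro x hx y hy h
  by_contra hne
  exact hA x hx y hy (corona_adj_of_same G p hne h)


/-- In the corona of G with complete graphs of order ≥ 2, every non-maximum independent
set A and vertex b ∉ A admit a maximum independent set S with A ⊆ S, b ∉ S. -/
theorem stmt17 {V : Type*} [Fintype V] [DecidableEq V] (G : SimpleGraph V)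
    (p : V → ℕ) (hp : ∀ v, 2 ≤ p v) :
    ∀ A : Finset (V ⊕ (Σ v : V, Fin (p v))), IndepSet (Corona G p) A →
      A.card < alpha (Corona G p) →
      ∀ b ∉ A, ∃ S : Finset (V ⊕ (Σ v : V, Fin (p v))),
        IndepSet (Corona G p) S ∧ S.card = alpha (Corona G p) ∧ A ⊆ S ∧ b ∉ S := by
  classical
  intro A hA _ b hb
  -- for each v, a non-b petal vertex
  have hpick : ∀ v : V, ∃ i : Fin (p v), (Sum.inr ⟨v, i⟩ : V ⊕ (Σ v : V, Fin (p v))) ≠ b := by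
    intro v
    by_contra hcon
    push_neg at hcon
    have h0 := hcon ⟨0, by have := hp v; omega⟩
    have h1 := hcon ⟨1, by have := hp v; omega⟩
    have : (⟨v, (⟨0, by have := hp v; omega⟩ : Fin (p v))⟩ : Σ v : V, Fin (p v)) = ⟨v, ⟨1, by have := hp v; omega⟩⟩ :=
      Sum.inr.inj (h0.trans h1.symm)
    simp at this
  -- the selector
  set g : V → V ⊕ (Σ v : V, Fin (p v)) := fun v =>
    if h : ∃ a ∈ A, clv a = v then h.choose else Sum.inr ⟨v, (hpick v).choose⟩ with hg
  have hclg : ∀ v, clv (g v) = v := by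
    intro v
    by_cases h : ∃ a ∈ A, clv a = v
    · simp only [hg, dif_pos h]; exact h.choose_spec.2
    · simp only [hg, dif_neg h]; rfl
  have hgA : ∀ v, (∃ a ∈ A, clv a = v) → g v ∈ A := by
    intro v h
    simp only [hg, dif_pos h]; exact h.choose_spec.1
  have hgnotA : ∀ v, ¬(∃ a ∈ A, clv a = v) → g v = Sum.inr ⟨v, (hpick v).choose⟩ := by
    intro v h; simp only [hg, dif_neg h]
  set S : Finset (V ⊕ (Σ v : V, Fin (p v))) := Finset.image g Finset.univ with hS
  have hginj : Function.Injective g := by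
    intro v w h
    have := hclg v
    rw [h, hclg w] at this
    exact this.symm
  have hScard : S.card = Fintype.card V := by
    rw [hS, Finset.card_image_of_injective _ hginj, Finset.card_univ]
  -- S independent
  have hSindep : IndepSet (Corona G p) S := by
    intro x hx y hy hadj
    simp only [hS, Finset.mem_image, Finset.mem_univ, true_and] at hx hy
    obtain ⟨v, rfl⟩ := hx
    obtain ⟨w, rfl⟩ := hy
    have hvw : v ≠ w := by
      rintro rfl
      exact (Corona G p).loopless.irrefl _ hadj
    have hc : clv (g v) ≠ clv (g w) := by rw [hclg, hclg]; exact hvw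
    obtain ⟨u, u', hxu, hyu, hGadj⟩ := corona_adj_cross G p hadj hc
    -- g v = inl u means the choose branch was taken
    have hmemv : g v ∈ A := by
      by_contra hmem
      by_cases h : ∃ a ∈ A, clv a = v
      · exact hmem (hgA v h)
      · rw [hgnotA v h] at hxu; cases hxu
    have hmemw : g w ∈ A := by
      by_contra hmem
      by_cases h : ∃ a ∈ A, clv a = w
      · exact hmem (hgA w h)
      · rw [hgnotA w h] at hyu; cases hyu
    exact hA _ hmemv _ hmemw hadj
  -- A ⊆ S
  have hAS : A ⊆ S := by
    intro a ha
    have h : ∃ a' ∈ A, clv a' = clv a := ⟨a, ha, rfl⟩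
    have h1 : g (clv a) ∈ A := hgA _ h
    have h2 : clv (g (clv a)) = clv a := hclg _
    have : g (clv a) = a := clv_injOn G p hA (by exact h1) (by exact ha) h2
    rw [hS]
    exact Finset.mem_image.2 ⟨clv a, Finset.mem_univ _, this⟩
  -- b ∉ S
  have hbS : b ∉ S := by
    intro hbs
    simp only [hS, Finset.mem_image, Finset.mem_univ, true_and] at hbs
    obtain ⟨v, hv⟩ := hbs
    by_cases h : ∃ a ∈ A, clv a = v
    · exact hb (hv ▸ hgA v h)
    · rw [hgnotA v h] at hv
      exact (hpick v).choose_spec hv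
  -- alpha = card V
  have halpha : alpha (Corona G p) = Fintype.card V := by
    apply le_antisymm
    · apply Finset.sup_le
      intro B hBmem
      simp only [Finset.mem_filter, Finset.mem_powerset] at hBmem
      calc B.card = (B.image clv).card := by
            rw [Finset.card_image_of_injOn (clv_injOn G p hBmem.2)]
          _ ≤ Fintype.card V := Finset.card_le_univ _
    · rw [← hScard]
      apply Finset.le_sup (f := Finset.card)
      simp only [Finset.mem_filter, Finset.mem_powerset]
      exact ⟨Finset.subset_univ _, hSindep⟩
  exact ⟨S, hSindep, by rw [halpha, hScard], hAS, hbS⟩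
end

section
/- The corona G = H ∘ K_1 (every vertex of H gets a pendant leaf) has two disjoint maximum independent sets if and only if H is bipartite. -/
open Finset

/-- The corona H ∘ K₁: each vertex u of H gets a pendant leaf (modeled on V ⊕ V, with
Sum.inr u the pendant vertex attached to u). -/
def CoronaK1 {V : Type*} (H : SimpleGraph V) : SimpleGraph (V ⊕ V) :=
  SimpleGraph.fromRel (fun a b =>
    match a, b with
    | Sum.inl u, Sum.inl w => H.Adj u w
    | Sum.inl u, Sum.inr w => u = w
    | Sum.inr _, _ => False)

lemma corona_adj_ll {V : Type*} (H : SimpleGraph V) (u w : V) :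
    (CoronaK1 H).Adj (Sum.inl u) (Sum.inl w) ↔ H.Adj u w := by
  simp only [CoronaK1, SimpleGraph.fromRel_adj]
  constructor
  · rintro ⟨_, h | h⟩
    · exact h
    · exact h.symm
  · intro h
    exact ⟨fun he => H.ne_of_adj h (by injection he), Or.inl h⟩

lemma corona_adj_lr {V : Type*} (H : SimpleGraph V) (u w : V) :
    (CoronaK1 H).Adj (Sum.inl u) (Sum.inr w) ↔ u = w := by
  simp [CoronaK1, SimpleGraph.fromRel_adj]

lemma corona_adj_rr {V : Type*} (H : SimpleGraph V) (u w : V) :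
    ¬ (CoronaK1 H).Adj (Sum.inr u) (Sum.inr w) := by
  simp [CoronaK1, SimpleGraph.fromRel_adj]

lemma corona_injOn {V : Type*} (H : SimpleGraph V) {A : Finset (V ⊕ V)}
    (hind : IndepSet (CoronaK1 H) A) : Set.InjOn (Sum.elim id id) (A : Set (V ⊕ V)) := by
  intro a ha b hb hab
  by_contra hne
  match a, b with
  | Sum.inl u, Sum.inl w => simp at hab; exact hne (by rw [hab])
  | Sum.inr u, Sum.inr w => simp at hab; exact hne (by rw [hab])
  | Sum.inl u, Sum.inr w =>
      simp at hab
      exact hind _ ha _ hb ((corona_adj_lr H u w).mpr hab)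
  | Sum.inr u, Sum.inl w =>
      simp at hab
      exact hind _ hb _ ha ((corona_adj_lr H w u).mpr hab.symm)

lemma alpha_corona {V : Type*} [Fintype V] (H : SimpleGraph V) :
    alpha (CoronaK1 H) = Fintype.card V := by
  classical
  simp only [alpha, alphaOn]
  apply le_antisymm
  · apply Finset.sup_le
    intro A hA
    simp only [Finset.mem_filter, Finset.mem_powerset] at hA
    calc A.card = (A.image (Sum.elim id id)).card :=
          (Finset.card_image_of_injOn (corona_injOn H hA.2)).symm
      _ ≤ Fintype.card V := Finset.card_le_univ _
  · have hmem : (univ.image Sum.inr : Finset (V ⊕ V)) ∈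
        (univ.powerset.filter (fun A => IndepSet (CoronaK1 H) A)) := by
      simp only [mem_filter, mem_powerset]
      refine ⟨subset_univ _, ?_⟩
      intro a ha b hb
      simp only [mem_image, mem_univ, true_and] at ha hb
      obtain ⟨u, rfl⟩ := ha; obtain ⟨w, rfl⟩ := hb
      exact corona_adj_rr H u w
    have := Finset.le_sup (f := Finset.card) hmem
    rwa [Finset.card_image_of_injective _ Sum.inr_injective, Finset.card_univ] at this

lemma corona_cover {V : Type*} [Fintype V] (H : SimpleGraph V) {S : Finset (V ⊕ V)}
    (hind : IndepSet (CoronaK1 H) S) (hcard : S.card = Fintype.card V) (v : V) :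
    Sum.inl v ∈ S ∨ Sum.inr v ∈ S := by
  classical
  have himg : S.image (Sum.elim id id) = univ := by
    apply Finset.eq_univ_of_card
    rw [Finset.card_image_of_injOn (corona_injOn H hind), hcard]
  have hv : v ∈ S.image (Sum.elim id id) := himg ▸ mem_univ v
  simp only [mem_image] at hv
  obtain ⟨a, ha, hav⟩ := hv
  match a with
  | Sum.inl u => left; simpa using hav ▸ (by simpa using hav) ▸ ha
  | Sum.inr u => right; exact (by simpa using hav : u = v) ▸ ha

/-- H ∘ K₁ has two disjoint maximum independent sets iff H is bipartite. -/
theorem stmt19 {V : Type*} [Fintype V] [DecidableEq V] (H : SimpleGraph V) :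
    (∃ S₁ S₂ : Finset (V ⊕ V), IndepSet (CoronaK1 H) S₁ ∧ IndepSet (CoronaK1 H) S₂ ∧
      S₁.card = alpha (CoronaK1 H) ∧ S₂.card = alpha (CoronaK1 H) ∧ Disjoint S₁ S₂) ↔
    (∃ X : Finset V, IndepSet H X ∧ IndepSet H Xᶜ) := by
  classical
  rw [show alpha (CoronaK1 H) = Fintype.card V from alpha_corona H]
  constructor
  · rintro ⟨S₁, S₂, h1, h2, hc1, hc2, hd⟩
    refine ⟨univ.filter (fun v => Sum.inl v ∈ S₁), ?_, ?_⟩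
    · intro u hu w hw hadj
      simp only [mem_filter] at hu hw
      exact h1 _ hu.2 _ hw.2 ((corona_adj_ll H u w).mpr hadj)
    · intro u hu w hw hadj
      simp only [mem_compl, mem_filter, mem_univ, true_and] at hu hw
      have hu2 : Sum.inl u ∈ S₂ := by
        have := (corona_cover H h1 hc1 u).resolve_left hu
        have hnotr : Sum.inr u ∉ S₂ := fun h => (Finset.disjoint_left.mp hd this) h
        exact (corona_cover H h2 hc2 u).resolve_right hnotr
      have hw2 : Sum.inl w ∈ S₂ := by
        have := (corona_cover H h1 hc1 w).resolve_left hw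
        have hnotr : Sum.inr w ∉ S₂ := fun h => (Finset.disjoint_left.mp hd this) h
        exact (corona_cover H h2 hc2 w).resolve_right hnotr
      exact h2 _ hu2 _ hw2 ((corona_adj_ll H u w).mpr hadj)
  · rintro ⟨X, hX, hXc⟩
    refine ⟨X.image Sum.inl ∪ Xᶜ.image Sum.inr, Xᶜ.image Sum.inl ∪ X.image Sum.inr,
      ?_, ?_, ?_, ?_, ?_⟩
    · intro a ha b hb hadj
      simp only [mem_union, mem_image, mem_compl] at ha hb
      rcases ha with ⟨u, hu, rfl⟩ | ⟨u, hu, rfl⟩ <;>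
        rcases hb with ⟨w, hw, rfl⟩ | ⟨w, hw, rfl⟩
      · exact hX _ hu _ hw ((corona_adj_ll H u w).mp hadj)
      · exact hw (((corona_adj_lr H u w).mp hadj) ▸ hu)
      · exact hu (((corona_adj_lr H w u).mp hadj.symm) ▸ hw)
      · exact corona_adj_rr H u w hadj
    · intro a ha b hb hadj
      simp only [mem_union, mem_image, mem_compl] at ha hb
      rcases ha with ⟨u, hu, rfl⟩ | ⟨u, hu, rfl⟩ <;>
        rcases hb with ⟨w, hw, rfl⟩ | ⟨w, hw, rfl⟩
      · exact hXc _ (mem_compl.mpr hu) _ (mem_compl.mpr hw) ((corona_adj_ll H u w).mp hadj)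
      · exact hu (((corona_adj_lr H u w).mp hadj) ▸ hw)
      · exact hw (((corona_adj_lr H w u).mp hadj.symm) ▸ hu)
      · exact corona_adj_rr H u w hadj
    · have hle := Finset.card_le_univ X
      rw [Finset.card_union_of_disjoint (by simp [Finset.disjoint_left]),
        Finset.card_image_of_injective _ Sum.inl_injective,
        Finset.card_image_of_injective _ Sum.inr_injective, Finset.card_compl]
      omega
    · have hle := Finset.card_le_univ X
      rw [Finset.card_union_of_disjoint (by simp [Finset.disjoint_left]),
        Finset.card_image_of_injective _ Sum.inl_injective,
        Finset.card_image_of_injective _ Sum.inr_injective, Finset.card_compl]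
      omega
    · simp only [Finset.disjoint_left, mem_union, mem_image, mem_compl]
      rintro a (⟨u, hu, rfl⟩ | ⟨u, hu, rfl⟩) h
      · rcases h with ⟨w, hw, he⟩ | ⟨w, hw, he⟩
        · rw [Sum.inl.injEq] at he; exact hw (he ▸ hu)
        · exact Sum.inr_ne_inl he
      · rcases h with ⟨w, hw, he⟩ | ⟨w, hw, he⟩
        · exact Sum.inl_ne_inr he
        · rw [Sum.inr.injEq] at he; exact hu (he ▸ hw)
end
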